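/- arXiv:2308.15083 — 6 statements merged into one kernel-verified Lean document; each statement's English description precedes it below -/
import Mathlib

section
/- Let d ≥ 1 and g > 0. Let z_b : ℝ^d → ℝ, η : ℝ × ℝ^d → ℝ be C² functions and let u : ℝ × ℝ^d × ℝ → ℝ^d, w : ℝ × ℝ^d × ℝ → ℝ be C² functions satisfying, for all (t,x,z) ∈ ℝ × ℝ^d × ℝ, the hydrostatic Euler equations ∂_t u + (u·∇_x)u + w ∂_z u + g ∇_x η = 0 and ∇_x·u + ∂_z w = 0. Let φ : ℝ × ℝ^d × [0,1] → ℝ be a C² function satisfying ∂_t φ(t,x,λ) + u(t,x,φ(t,x,λ))·∇_x φ(t,x,λ) = w(t,x,φ(t,x,λ)) for all (t,x,λ), together with φ(t,x,0) = z_b(x) and φ(t,x,1) = η(t,x). Then the functions H(t,x,λ) := ∂_λ φ(t,x,λ) and ũ(t,x,λ) := u(t,x,φ(t,x,λ)) satisfy, for all (t,x,λ) ∈ ℝ × ℝ^d × (0,1), the semi-Lagrangian system ∂_t H + ∇_x·(H ũ) = 0 and ∂_t ũ + (ũ·∇_x)ũ + g ∇_x ∫₀¹ H(t,x,λ') dλ'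 = −g ∇_x z_b. -/
set_option maxHeartbeats 2000000

set_option maxHeartbeats 2000000

open ContinuousLinearMap

section helpers
variable {F G H' : Type*} [NormedAddCommGroup F] [NormedSpace ℝ F]
  [NormedAddCommGroup G] [NormedSpace ℝ G] [NormedAddCommGroup H'] [NormedSpace ℝ H']

lemma slot1_hasDerivAt (f : ℝ × F × G → H') {t : ℝ} {x : F} {z : G}
    (hf : DifferentiableAt ℝ f (t, x, z)) :
    HasDerivAt (fun s => f (s, x, z)) (fderiv ℝ f (t, x, z) (1, 0, 0)) t := by
  have h := HasFDerivAt.comp (f := fun s : ℝ => (s, x, z)) t hf.hasFDerivAt (HasFDerivAt.prodMk (hasFDerivAt_id t) (hasFDerivAt_const (x, z) t))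
  simpa [Function.comp_def, Prod.mk_zero_zero] using h.hasDerivAt

lemma slot3_hasDerivAt (f : ℝ × F × ℝ → H') {t : ℝ} {x : F} {z : ℝ}
    (hf : DifferentiableAt ℝ f (t, x, z)) :
    HasDerivAt (fun ζ => f (t, x, ζ)) (fderiv ℝ f (t, x, z) (0, 0, 1)) z := by
  have h := HasFDerivAt.comp (f := fun ζ : ℝ => (t, x, ζ)) z hf.hasFDerivAt
    (HasFDerivAt.prodMk (hasFDerivAt_const t z) (HasFDerivAt.prodMk (hasFDerivAt_const x z) (hasFDerivAt_id z)))
  simpa [Function.comp_def] using h.hasDerivAt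

lemma slot2_hasFDerivAt (f : ℝ × F × G → H') {t : ℝ} {x : F} {z : G}
    (hf : DifferentiableAt ℝ f (t, x, z)) :
    HasFDerivAt (fun y => f (t, y, z))
      ((fderiv ℝ f (t, x, z)).comp
        ((0 : F →L[ℝ] ℝ).prod ((ContinuousLinearMap.id ℝ F).prod (0 : F →L[ℝ] G)))) x :=
  hf.hasFDerivAt.comp x
    (HasFDerivAt.prodMk (hasFDerivAt_const t x) (HasFDerivAt.prodMk (hasFDerivAt_id x) (hasFDerivAt_const z x)))

lemma slot2_fderiv_apply (f : ℝ × F × G → H') {t : ℝ} {x : F} {z : G}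
    (hf : DifferentiableAt ℝ f (t, x, z)) (v : F) :
    fderiv ℝ (fun y => f (t, y, z)) x v = fderiv ℝ f (t, x, z) (0, v, 0) := by
  rw [(slot2_hasFDerivAt f hf).fderiv]; simp

lemma slot2chain_hasFDerivAt (f : ℝ × F × G → H') (ψ : F → G) {t : ℝ} {x : F} {Dψ : F →L[ℝ] G}
    (hf : DifferentiableAt ℝ f (t, x, ψ x)) (hψ : HasFDerivAt ψ Dψ x) :
    HasFDerivAt (fun y => f (t, y, ψ y))
      ((fderiv ℝ f (t, x, ψ x)).comp
        ((0 : F →L[ℝ] ℝ).prod ((ContinuousLinearMap.id ℝ F).prod Dψ))) x :=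
  hf.hasFDerivAt.comp x (HasFDerivAt.prodMk (hasFDerivAt_const t x) (HasFDerivAt.prodMk (hasFDerivAt_id x) hψ))

lemma slot13chain_hasDerivAt (f : ℝ × F × G → H') (ψ : ℝ → G) {t : ℝ} {x : F} {dψ : G}
    (hf : DifferentiableAt ℝ f (t, x, ψ t)) (hψ : HasDerivAt ψ dψ t) :
    HasDerivAt (fun s => f (s, x, ψ s)) (fderiv ℝ f (t, x, ψ t) (1, 0, dψ)) t := by
  have h := hf.hasFDerivAt.comp t
    (HasFDerivAt.prodMk (hasFDerivAt_id t) (HasFDerivAt.prodMk (hasFDerivAt_const x t) hψ.hasFDerivAt))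
  simpa [Function.comp_def] using h.hasDerivAt

lemma slot33chain_hasDerivAt (f : ℝ × F × G → H') (ψ : ℝ → G) {t : ℝ} {x : F} {l : ℝ} {dψ : G}
    (hf : DifferentiableAt ℝ f (t, x, ψ l)) (hψ : HasDerivAt ψ dψ l) :
    HasDerivAt (fun m => f (t, x, ψ m)) (fderiv ℝ f (t, x, ψ l) (0, 0, dψ)) l := by
  have h := hf.hasFDerivAt.comp l
    (HasFDerivAt.prodMk (hasFDerivAt_const t l) (HasFDerivAt.prodMk (hasFDerivAt_const x l) hψ.hasFDerivAt))
  simpa [Function.comp_def] using h.hasDerivAt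

end helpers

lemma clm_sum_single {d : ℕ} {M : Type*} [NormedAddCommGroup M] [NormedSpace ℝ M]
    (L : (ℝ × EuclideanSpace ℝ (Fin d) × ℝ) →L[ℝ] M) (v : EuclideanSpace ℝ (Fin d)) :
    L ((0 : ℝ), v, (0 : ℝ)) = ∑ i, v i • L (0, EuclideanSpace.single i 1, 0) := by
  have hv : ((0:ℝ), v, (0:ℝ))
      = ∑ i, v i • ((0:ℝ), (EuclideanSpace.single i (1:ℝ) : EuclideanSpace ℝ (Fin d)), (0:ℝ)) := by
    have hb := (EuclideanSpace.basisFun (Fin d) ℝ).sum_repr v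
    simp only [EuclideanSpace.basisFun_apply, EuclideanSpace.basisFun_repr] at hb
    simp [Prod.ext_iff, Prod.fst_sum, Prod.snd_sum, hb]
  rw [hv, map_sum]
  exact Finset.sum_congr rfl fun i _ => L.map_smul _ _

private def Phi (d : ℕ) (φ : ℝ → EuclideanSpace ℝ (Fin d) → ℝ → ℝ) :
    ℝ × EuclideanSpace ℝ (Fin d) × ℝ → ℝ := fun p => φ p.1 p.2.1 p.2.2

private def UU (d : ℕ) (u : ℝ → EuclideanSpace ℝ (Fin d) → ℝ → EuclideanSpace ℝ (Fin d)) :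
    ℝ × EuclideanSpace ℝ (Fin d) × ℝ → EuclideanSpace ℝ (Fin d) := fun p => u p.1 p.2.1 p.2.2

private def WW (d : ℕ) (w : ℝ → EuclideanSpace ℝ (Fin d) → ℝ → ℝ) :
    ℝ × EuclideanSpace ℝ (Fin d) × ℝ → ℝ := fun p => w p.1 p.2.1 p.2.2




/-- Transformation of the hydrostatic free-surface Euler system into the
semi-Lagrangian formulation: if `(η, u, w)` solves the hydrostatic Euler equations and `φ`
is the semi-Lagrangian change of variable (transported by the flow, with `φ = z_b` at
`λ = 0` and `φ = η` at `λ = 1`), then `H = ∂_λ φ` and `ũ(t,x,λ) = u(t,x,φ(t,x,λ))`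
satisfy `∂ₜH + ∇ₓ·(Hũ) = 0` and `∂ₜũ + (ũ·∇ₓ)ũ + g∇ₓ∫₀¹H dλ' = -g∇ₓ z_b`. -/
theorem stmt0 (d : ℕ) (hd : 1 ≤ d) (g : ℝ) (hg : 0 < g)
    (zb : EuclideanSpace ℝ (Fin d) → ℝ)
    (η : ℝ → EuclideanSpace ℝ (Fin d) → ℝ)
    (u : ℝ → EuclideanSpace ℝ (Fin d) → ℝ → EuclideanSpace ℝ (Fin d))
    (w : ℝ → EuclideanSpace ℝ (Fin d) → ℝ → ℝ)
    (φ : ℝ → EuclideanSpace ℝ (Fin d) → ℝ → ℝ)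
    (hzb : ContDiff ℝ 2 zb)
    (hη : ContDiff ℝ 2 (fun p : ℝ × EuclideanSpace ℝ (Fin d) => η p.1 p.2))
    (hu : ContDiff ℝ 2 (fun p : ℝ × EuclideanSpace ℝ (Fin d) × ℝ => u p.1 p.2.1 p.2.2))
    (hw : ContDiff ℝ 2 (fun p : ℝ × EuclideanSpace ℝ (Fin d) × ℝ => w p.1 p.2.1 p.2.2))
    (hφ : ContDiff ℝ 2 (fun p : ℝ × EuclideanSpace ℝ (Fin d) × ℝ => φ p.1 p.2.1 p.2.2))
    -- momentum equation: `∂ₜu + (u·∇ₓ)u + w ∂_z u + g ∇ₓη = 0`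
    (heuler1 : ∀ (t : ℝ) (x : EuclideanSpace ℝ (Fin d)) (z : ℝ),
      deriv (fun s => u s x z) t
        + fderiv ℝ (fun y => u t y z) x (u t x z)
        + w t x z • deriv (fun ζ => u t x ζ) z
        + g • gradient (fun y => η t y) x = 0)
    -- incompressibility: `∇ₓ·u + ∂_z w = 0`
    (heuler2 : ∀ (t : ℝ) (x : EuclideanSpace ℝ (Fin d)) (z : ℝ),
      (∑ i, fderiv ℝ (fun y => u t y z) x (EuclideanSpace.single i 1) i)
        + deriv (fun ζ => w t x ζ) z = 0)
    -- transport equation for `φ`: `∂ₜφ + u(t,x,φ)·∇ₓφ = w(t,x,φ)`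
    (hφeq : ∀ (t : ℝ) (x : EuclideanSpace ℝ (Fin d)) (l : ℝ),
      deriv (fun s => φ s x l) t
        + fderiv ℝ (fun y => φ t y l) x (u t x (φ t x l)) = w t x (φ t x l))
    (hφ0 : ∀ t x, φ t x 0 = zb x)
    (hφ1 : ∀ t x, φ t x 1 = η t x) :
    ∀ (t : ℝ) (x : EuclideanSpace ℝ (Fin d)), ∀ l ∈ Set.Ioo (0:ℝ) 1,
      -- mass equation: `∂ₜH + ∇ₓ·(Hũ) = 0` with `H = ∂_λ φ`, `ũ = u(t,x,φ)`
      (deriv (fun s => deriv (fun m => φ s x m) l) t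
        + ∑ i, fderiv ℝ
            (fun y => deriv (fun m => φ t y m) l * u t y (φ t y l) i) x
            (EuclideanSpace.single i 1) = 0)
      ∧
      -- momentum equation: `∂ₜũ + (ũ·∇ₓ)ũ + g ∇ₓ∫₀¹ H dλ' = -g ∇ₓ z_b`
      (deriv (fun s => u s x (φ s x l)) t
        + fderiv ℝ (fun y => u t y (φ t y l)) x (u t x (φ t x l))
        + g • gradient (fun y => ∫ m in (0:ℝ)..1, deriv (fun m' => φ t y m') m) x
        = -(g • gradient zb x)) := by
  intro t x l hl
  constructor
  · -- mass equation
    have hΦd : Differentiable ℝ (Phi d φ) := hφ.differentiable two_ne_zero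
    have hUd : Differentiable ℝ (UU d u) := hu.differentiable two_ne_zero
    have hWd : Differentiable ℝ (WW d w) := hw.differentiable two_ne_zero
    have hφ' : ContDiff ℝ 2 (Phi d φ) := hφ
    have hAc1 : ContDiff ℝ 1 (fderiv ℝ (Phi d φ)) := hφ'.fderiv_right (m := 1) (by norm_num)
    have hAd : Differentiable ℝ (fderiv ℝ (Phi d φ)) := hAc1.differentiable one_ne_zero
    have hsymm : ∀ v W : ℝ × EuclideanSpace ℝ (Fin d) × ℝ,
        fderiv ℝ (fderiv ℝ (Phi d φ)) (t, x, l) v W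
          = fderiv ℝ (fderiv ℝ (Phi d φ)) (t, x, l) W v :=
      second_derivative_symmetric (fun y => (hΦd y).hasFDerivAt) ((hAd _).hasFDerivAt)
    -- T1
    have hT1fun : (fun s => deriv (fun m => φ s x m) l)
        = fun s => fderiv ℝ (Phi d φ) (s, x, l) (0, 0, 1) :=
      funext fun s => (slot3_hasDerivAt _ (hΦd _)).deriv
    have hA1 : HasDerivAt (fun s => fderiv ℝ (Phi d φ) (s, x, l))
        (fderiv ℝ (fderiv ℝ (Phi d φ)) (t, x, l) (1, 0, 0)) t := slot1_hasDerivAt _ (hAd _)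
    have hT1 : deriv (fun s => fderiv ℝ (Phi d φ) (s, x, l) (0, 0, 1)) t
        = fderiv ℝ (fderiv ℝ (Phi d φ)) (t, x, l) (1, 0, 0) (0, 0, 1) := by
      have h := (hA1.clm_apply (hasDerivAt_const t
        (((0:ℝ), (0 : EuclideanSpace ℝ (Fin d)), (1:ℝ))))).deriv
      simpa using h
    rw [hT1fun, hT1]
    -- ingredients for the sum
    have hφm : HasDerivAt (fun m => φ t x m) (fderiv ℝ (Phi d φ) (t, x, l) (0, 0, 1)) l :=
      slot3_hasDerivAt _ (hΦd _)
    have hψx : HasFDerivAt (fun y => φ t y l)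
        ((fderiv ℝ (Phi d φ) (t, x, l)).comp
          ((0 : _ →L[ℝ] ℝ).prod ((ContinuousLinearMap.id ℝ _).prod 0))) x :=
      slot2_hasFDerivAt _ (hΦd _)
    have hM2 : HasFDerivAt (fun y => u t y (φ t y l))
        ((fderiv ℝ (UU d u) (t, x, φ t x l)).comp
          ((0 : _ →L[ℝ] ℝ).prod ((ContinuousLinearMap.id ℝ _).prod
            ((fderiv ℝ (Phi d φ) (t, x, l)).comp
              ((0 : _ →L[ℝ] ℝ).prod ((ContinuousLinearMap.id ℝ _).prod 0)))))) x :=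
      slot2chain_hasFDerivAt _ _ (hUd _) hψx
    have hA2 : HasFDerivAt (fun y => fderiv ℝ (Phi d φ) (t, y, l))
        ((fderiv ℝ (fderiv ℝ (Phi d φ)) (t, x, l)).comp
          ((0 : _ →L[ℝ] ℝ).prod ((ContinuousLinearMap.id ℝ _).prod 0))) x :=
      slot2_hasFDerivAt _ (hAd _)
    have hHy : HasFDerivAt (fun y => deriv (fun m => φ t y m) l)
        ((fderiv ℝ (Phi d φ) (t, x, l)).comp
            (0 : EuclideanSpace ℝ (Fin d) →L[ℝ] ℝ × EuclideanSpace ℝ (Fin d) × ℝ) +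
          ((fderiv ℝ (fderiv ℝ (Phi d φ)) (t, x, l)).comp
                (ContinuousLinearMap.prod 0
                  ((ContinuousLinearMap.id ℝ (EuclideanSpace ℝ (Fin d))).prod 0))).flip
            (0, 0, 1)) x := by
      refine HasFDerivAt.congr_of_eventuallyEq (hA2.clm_apply (hasFDerivAt_const _ x))
        (Filter.Eventually.of_forall fun y => ?_)
      exact (slot3_hasDerivAt (Phi d φ) (hΦd (t, y, l))).deriv
    have hui : ∀ i : Fin d, HasFDerivAt (fun y => u t y (φ t y l) i)
        ((EuclideanSpace.proj i).comp
          ((fderiv ℝ (UU d u) (t, x, φ t x l)).comp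
            ((0 : _ →L[ℝ] ℝ).prod ((ContinuousLinearMap.id ℝ _).prod
              ((fderiv ℝ (Phi d φ) (t, x, l)).comp
                ((0 : _ →L[ℝ] ℝ).prod ((ContinuousLinearMap.id ℝ _).prod 0))))))) x := by
      intro i
      exact HasFDerivAt.comp x
        (ContinuousLinearMap.hasFDerivAt (f := EuclideanSpace.proj i)) hM2
    have hprod := fun i : Fin d => hHy.mul (hui i)
    have hterm : ∀ i : Fin d,
        fderiv ℝ (fun y => deriv (fun m => φ t y m) l * u t y (φ t y l) i) x
          (EuclideanSpace.single i 1)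
        = fderiv ℝ (Phi d φ) (t, x, l) (0, 0, 1)
            * (fderiv ℝ (UU d u) (t, x, φ t x l)
                ((0:ℝ), EuclideanSpace.single i 1,
                  fderiv ℝ (Phi d φ) (t, x, l) (0, EuclideanSpace.single i 1, 0)) i)
          + u t x (φ t x l) i
            * (fderiv ℝ (fderiv ℝ (Phi d φ)) (t, x, l)
                (0, EuclideanSpace.single i 1, 0) (0, 0, 1)) := by
      intro i
      rw [(show HasFDerivAt (fun y => deriv (fun m => φ t y m) l * u t y (φ t y l) i) _ x
        from hprod i).fderiv]
      rw [hφm.deriv]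
      simp [ContinuousLinearMap.add_apply, ContinuousLinearMap.smul_apply,
        ContinuousLinearMap.comp_apply, ContinuousLinearMap.prod_apply,
        ContinuousLinearMap.flip_apply, ContinuousLinearMap.zero_apply, smul_eq_mul,
        PiLp.proj_apply]
    -- rewrite the sum
    have hsum1 : (∑ i, fderiv ℝ
          (fun y => deriv (fun m => φ t y m) l * u t y (φ t y l) i) x
          (EuclideanSpace.single i 1))
        = ∑ i, (fderiv ℝ (Phi d φ) (t, x, l) (0, 0, 1)
            * (fderiv ℝ (UU d u) (t, x, φ t x l)
                ((0:ℝ), EuclideanSpace.single i 1,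
                  fderiv ℝ (Phi d φ) (t, x, l) (0, EuclideanSpace.single i 1, 0)) i)
          + u t x (φ t x l) i
            * (fderiv ℝ (fderiv ℝ (Phi d φ)) (t, x, l)
                (0, EuclideanSpace.single i 1, 0) (0, 0, 1))) :=
      Finset.sum_congr rfl fun i _ => hterm i
    rw [hsum1]
    have hsplit : ∀ i : Fin d, fderiv ℝ (UU d u) (t, x, φ t x l)
          ((0:ℝ), EuclideanSpace.single i 1,
            fderiv ℝ (Phi d φ) (t, x, l) (0, EuclideanSpace.single i 1, 0)) i
        = fderiv ℝ (UU d u) (t, x, φ t x l) ((0:ℝ), EuclideanSpace.single i 1, (0:ℝ)) i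
          + fderiv ℝ (Phi d φ) (t, x, l) (0, EuclideanSpace.single i 1, 0)
            * fderiv ℝ (UU d u) (t, x, φ t x l)
              ((0:ℝ), (0 : EuclideanSpace ℝ (Fin d)), (1:ℝ)) i := by
      intro i
      rw [show ((0:ℝ), (EuclideanSpace.single i (1:ℝ) : EuclideanSpace ℝ (Fin d)),
            fderiv ℝ (Phi d φ) (t, x, l) (0, EuclideanSpace.single i 1, 0))
          = ((0:ℝ), (EuclideanSpace.single i (1:ℝ) : EuclideanSpace ℝ (Fin d)), (0:ℝ))
            + fderiv ℝ (Phi d φ) (t, x, l) (0, EuclideanSpace.single i 1, 0)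
              • ((0:ℝ), (0 : EuclideanSpace ℝ (Fin d)), (1:ℝ)) by
        simp [Prod.ext_iff], map_add, map_smul]
      simp [smul_eq_mul]
    have piece1b : ∑ i, fderiv ℝ (Phi d φ) (t, x, l)
          ((0:ℝ), EuclideanSpace.single i 1, (0:ℝ))
          * fderiv ℝ (UU d u) (t, x, φ t x l) ((0:ℝ), (0 : EuclideanSpace ℝ (Fin d)), (1:ℝ)) i
        = fderiv ℝ (Phi d φ) (t, x, l)
            ((0:ℝ), fderiv ℝ (UU d u) (t, x, φ t x l)
              ((0:ℝ), (0 : EuclideanSpace ℝ (Fin d)), (1:ℝ)), (0:ℝ)) := by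
      rw [clm_sum_single (fderiv ℝ (Phi d φ) (t, x, l))]
      exact Finset.sum_congr rfl fun i _ => by rw [smul_eq_mul, mul_comm]
    have piece2 : ∑ i, u t x (φ t x l) i
          * fderiv ℝ (fderiv ℝ (Phi d φ)) (t, x, l)
              ((0:ℝ), EuclideanSpace.single i 1, (0:ℝ)) ((0:ℝ), (0 : EuclideanSpace ℝ (Fin d)), (1:ℝ))
        = fderiv ℝ (fderiv ℝ (Phi d φ)) (t, x, l)
            ((0:ℝ), (0 : EuclideanSpace ℝ (Fin d)), (1:ℝ)) ((0:ℝ), u t x (φ t x l), (0:ℝ)) := by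
      rw [clm_sum_single (fderiv ℝ (fderiv ℝ (Phi d φ)) (t, x, l)
        ((0:ℝ), (0 : EuclideanSpace ℝ (Fin d)), (1:ℝ))) (u t x (φ t x l))]
      exact Finset.sum_congr rfl fun i _ => by rw [smul_eq_mul, hsymm]
    have hsum2 : ∑ i, (fderiv ℝ (Phi d φ) (t, x, l) (0, 0, 1)
            * (fderiv ℝ (UU d u) (t, x, φ t x l)
                ((0:ℝ), EuclideanSpace.single i 1,
                  fderiv ℝ (Phi d φ) (t, x, l) (0, EuclideanSpace.single i 1, 0)) i)
          + u t x (φ t x l) i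
            * (fderiv ℝ (fderiv ℝ (Phi d φ)) (t, x, l)
                (0, EuclideanSpace.single i 1, 0) (0, 0, 1)))
        = fderiv ℝ (Phi d φ) (t, x, l) (0, 0, 1)
            * (∑ i, fderiv ℝ (UU d u) (t, x, φ t x l)
                ((0:ℝ), EuclideanSpace.single i 1, (0:ℝ)) i)
          + fderiv ℝ (Phi d φ) (t, x, l) (0, 0, 1)
            * fderiv ℝ (Phi d φ) (t, x, l)
              ((0:ℝ), fderiv ℝ (UU d u) (t, x, φ t x l)
                ((0:ℝ), (0 : EuclideanSpace ℝ (Fin d)), (1:ℝ)), (0:ℝ))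
          + fderiv ℝ (fderiv ℝ (Phi d φ)) (t, x, l)
              ((0:ℝ), (0 : EuclideanSpace ℝ (Fin d)), (1:ℝ)) ((0:ℝ), u t x (φ t x l), (0:ℝ)) := by
      simp only [hsplit, mul_add, Finset.sum_add_distrib, ← Finset.mul_sum]
      rw [piece1b, piece2]
    rw [hsum2]
    -- Euler incompressibility at z = φ t x l
    have e6 : ∀ i : Fin d, fderiv ℝ (fun y => u t y (φ t x l)) x (EuclideanSpace.single i 1) i
        = fderiv ℝ (UU d u) (t, x, φ t x l) ((0:ℝ), EuclideanSpace.single i 1, (0:ℝ)) i :=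
      fun i => congrArg (fun v : EuclideanSpace ℝ (Fin d) => v i)
        (slot2_fderiv_apply _ (hUd _) _)
    have e7 : deriv (fun ζ => w t x ζ) (φ t x l)
        = fderiv ℝ (WW d w) (t, x, φ t x l) (0, 0, 1) := (slot3_hasDerivAt _ (hWd _)).deriv
    have heu2 := heuler2 t x (φ t x l)
    rw [show (∑ i, fderiv ℝ (fun y => u t y (φ t x l)) x (EuclideanSpace.single i 1) i)
        = ∑ i, fderiv ℝ (UU d u) (t, x, φ t x l) ((0:ℝ), EuclideanSpace.single i 1, (0:ℝ)) i
      from Finset.sum_congr rfl fun i _ => e6 i, e7] at heu2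
    -- differentiate the transport identity in λ
    have hkey : ∀ m : ℝ, fderiv ℝ (Phi d φ) (t, x, m)
          ((1:ℝ), (0 : EuclideanSpace ℝ (Fin d)), (0:ℝ))
        + fderiv ℝ (Phi d φ) (t, x, m) ((0:ℝ), u t x (φ t x m), (0:ℝ))
        = w t x (φ t x m) := by
      intro m
      have e1 : deriv (fun s => φ s x m) t
          = fderiv ℝ (Phi d φ) (t, x, m) (1, 0, 0) := (slot1_hasDerivAt _ (hΦd _)).deriv
      have e2 : fderiv ℝ (fun y => φ t y m) x (u t x (φ t x m))
          = fderiv ℝ (Phi d φ) (t, x, m) (0, u t x (φ t x m), 0) :=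
        slot2_fderiv_apply _ (hΦd _) _
      have h := hφeq t x m
      rw [e1, e2] at h
      exact h
    have hc1 : HasDerivAt (fun m => fderiv ℝ (Phi d φ) (t, x, m))
        (fderiv ℝ (fderiv ℝ (Phi d φ)) (t, x, l) (0, 0, 1)) l := slot3_hasDerivAt _ (hAd _)
    have hUm : HasDerivAt (fun m => u t x (φ t x m))
        (fderiv ℝ (UU d u) (t, x, φ t x l)
          (0, 0, fderiv ℝ (Phi d φ) (t, x, l) (0, 0, 1))) l :=
      slot33chain_hasDerivAt _ _ (hUd _) hφm
    have htuple : HasDerivAt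
        (fun m => (((0:ℝ), u t x (φ t x m), (0:ℝ)) : ℝ × EuclideanSpace ℝ (Fin d) × ℝ))
        ((0:ℝ), fderiv ℝ (UU d u) (t, x, φ t x l)
          (0, 0, fderiv ℝ (Phi d φ) (t, x, l) (0, 0, 1)), (0:ℝ)) l :=
      HasDerivAt.prodMk (hasDerivAt_const l (0:ℝ)) (HasDerivAt.prodMk hUm (hasDerivAt_const l (0:ℝ)))
    have ha := hc1.clm_apply
      (hasDerivAt_const l (((1:ℝ), (0 : EuclideanSpace ℝ (Fin d)), (0:ℝ))))
    have hb := hc1.clm_apply htuple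
    have hG : HasDerivAt (fun m => fderiv ℝ (Phi d φ) (t, x, m)
          ((1:ℝ), (0 : EuclideanSpace ℝ (Fin d)), (0:ℝ))
        + fderiv ℝ (Phi d φ) (t, x, m) ((0:ℝ), u t x (φ t x m), (0:ℝ))) _ l := ha.add hb
    rw [show (fun m => fderiv ℝ (Phi d φ) (t, x, m)
          ((1:ℝ), (0 : EuclideanSpace ℝ (Fin d)), (0:ℝ))
        + fderiv ℝ (Phi d φ) (t, x, m) ((0:ℝ), u t x (φ t x m), (0:ℝ)))
        = fun m => w t x (φ t x m) from funext hkey] at hG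
    have hWm : HasDerivAt (fun m => w t x (φ t x m))
        (fderiv ℝ (WW d w) (t, x, φ t x l)
          (0, 0, fderiv ℝ (Phi d φ) (t, x, l) (0, 0, 1))) l :=
      slot33chain_hasDerivAt _ _ (hWd _) hφm
    have star := hG.unique hWm
    simp only [map_zero, add_zero] at star
    -- expand the chain-rule tuples
    have eDU : fderiv ℝ (UU d u) (t, x, φ t x l)
          ((0:ℝ), (0 : EuclideanSpace ℝ (Fin d)), fderiv ℝ (Phi d φ) (t, x, l) (0, 0, 1))
        = fderiv ℝ (Phi d φ) (t, x, l) (0, 0, 1)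
          • fderiv ℝ (UU d u) (t, x, φ t x l) ((0:ℝ), (0 : EuclideanSpace ℝ (Fin d)), (1:ℝ)) := by
      rw [show ((0:ℝ), (0 : EuclideanSpace ℝ (Fin d)),
            fderiv ℝ (Phi d φ) (t, x, l) (0, 0, 1))
          = fderiv ℝ (Phi d φ) (t, x, l) (0, 0, 1)
            • ((0:ℝ), (0 : EuclideanSpace ℝ (Fin d)), (1:ℝ)) by simp [Prod.ext_iff], map_smul]
    have eW : fderiv ℝ (WW d w) (t, x, φ t x l)
          ((0:ℝ), (0 : EuclideanSpace ℝ (Fin d)), fderiv ℝ (Phi d φ) (t, x, l) (0, 0, 1))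
        = fderiv ℝ (Phi d φ) (t, x, l) (0, 0, 1)
          * fderiv ℝ (WW d w) (t, x, φ t x l) ((0:ℝ), (0 : EuclideanSpace ℝ (Fin d)), (1:ℝ)) := by
      rw [show ((0:ℝ), (0 : EuclideanSpace ℝ (Fin d)),
            fderiv ℝ (Phi d φ) (t, x, l) (0, 0, 1))
          = fderiv ℝ (Phi d φ) (t, x, l) (0, 0, 1)
            • ((0:ℝ), (0 : EuclideanSpace ℝ (Fin d)), (1:ℝ)) by simp [Prod.ext_iff], map_smul,
        smul_eq_mul]
    have eA : fderiv ℝ (Phi d φ) (t, x, l)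
          ((0:ℝ), fderiv ℝ (Phi d φ) (t, x, l) (0, 0, 1)
            • fderiv ℝ (UU d u) (t, x, φ t x l) ((0:ℝ), (0 : EuclideanSpace ℝ (Fin d)), (1:ℝ)), (0:ℝ))
        = fderiv ℝ (Phi d φ) (t, x, l) (0, 0, 1)
          * fderiv ℝ (Phi d φ) (t, x, l)
              ((0:ℝ), fderiv ℝ (UU d u) (t, x, φ t x l)
                ((0:ℝ), (0 : EuclideanSpace ℝ (Fin d)), (1:ℝ)), (0:ℝ)) := by
      rw [show ((0:ℝ), fderiv ℝ (Phi d φ) (t, x, l) (0, 0, 1)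
            • fderiv ℝ (UU d u) (t, x, φ t x l) ((0:ℝ), (0 : EuclideanSpace ℝ (Fin d)), (1:ℝ)), (0:ℝ))
          = fderiv ℝ (Phi d φ) (t, x, l) (0, 0, 1)
            • ((0:ℝ), fderiv ℝ (UU d u) (t, x, φ t x l)
                ((0:ℝ), (0 : EuclideanSpace ℝ (Fin d)), (1:ℝ)), (0:ℝ)) by simp [Prod.ext_iff],
        map_smul, smul_eq_mul]
    rw [eDU, eW, eA] at star
    have hsymm1 : fderiv ℝ (fderiv ℝ (Phi d φ)) (t, x, l) (1, 0, 0) (0, 0, 1)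
        = fderiv ℝ (fderiv ℝ (Phi d φ)) (t, x, l)
            ((0:ℝ), (0 : EuclideanSpace ℝ (Fin d)), (1:ℝ))
            ((1:ℝ), (0 : EuclideanSpace ℝ (Fin d)), (0:ℝ)) := hsymm _ _
    rw [hsymm1]
    linear_combination star + fderiv ℝ (Phi d φ) (t, x, l) (0, 0, 1) * heu2
  · -- momentum equation
    have hΦd : Differentiable ℝ (Phi d φ) := hφ.differentiable two_ne_zero
    have hUd : Differentiable ℝ (UU d u) := hu.differentiable two_ne_zero
    have hWd : Differentiable ℝ (WW d w) := hw.differentiable two_ne_zero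
    have hφ' : ContDiff ℝ 2 (Phi d φ) := hφ
    -- partial derivatives of φ
    have hψt : HasDerivAt (fun s => φ s x l) (fderiv ℝ (Phi d φ) (t, x, l) (1, 0, 0)) t :=
      slot1_hasDerivAt _ (hΦd _)
    have hψx : HasFDerivAt (fun y => φ t y l)
        ((fderiv ℝ (Phi d φ) (t, x, l)).comp
          ((0 : _ →L[ℝ] ℝ).prod ((ContinuousLinearMap.id ℝ _).prod 0))) x :=
      slot2_hasFDerivAt _ (hΦd _)
    -- M1, M2
    have hM1 : HasDerivAt (fun s => u s x (φ s x l))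
        (fderiv ℝ (UU d u) (t, x, φ t x l) (1, 0, fderiv ℝ (Phi d φ) (t, x, l) (1, 0, 0))) t :=
      slot13chain_hasDerivAt _ _ (hUd _) hψt
    have hM2 : HasFDerivAt (fun y => u t y (φ t y l))
        ((fderiv ℝ (UU d u) (t, x, φ t x l)).comp
          ((0 : _ →L[ℝ] ℝ).prod ((ContinuousLinearMap.id ℝ _).prod
            ((fderiv ℝ (Phi d φ) (t, x, l)).comp
              ((0 : _ →L[ℝ] ℝ).prod ((ContinuousLinearMap.id ℝ _).prod 0)))))) x :=
      slot2chain_hasFDerivAt _ _ (hUd _) hψx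
    -- the integral is η - zb
    have hint : (fun y => ∫ m in (0:ℝ)..1, deriv (fun m' => φ t y m') m)
        = fun y => η t y - zb y := by
      funext y
      have hdiff : ∀ m : ℝ, DifferentiableAt ℝ (fun m' => φ t y m') m :=
        fun m => (slot3_hasDerivAt (Phi d φ) (hΦd (t, y, m))).differentiableAt
      have hderiv_eq : deriv (fun m' => φ t y m')
          = fun m => fderiv ℝ (Phi d φ) (t, y, m) (0, 0, 1) :=
        funext fun m => (slot3_hasDerivAt (Phi d φ) (hΦd _)).deriv
      have hcont : Continuous (deriv (fun m' => φ t y m')) := by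
        rw [hderiv_eq]
        have hAc : Continuous (fderiv ℝ (Phi d φ)) :=
          (hφ'.fderiv_right (m := 1) (by norm_num)).continuous
        exact (ContinuousLinearMap.apply ℝ ℝ
          (((0:ℝ), (0 : EuclideanSpace ℝ (Fin d)), (1:ℝ)))).continuous.comp
          (hAc.comp (by continuity))
      rw [intervalIntegral.integral_deriv_eq_sub (fun m _ => hdiff m)
        (hcont.intervalIntegrable _ _), hφ1, hφ0]
    rw [hint]
    have hηdiff : DifferentiableAt ℝ (fun y => η t y) x :=
      ((hη.differentiable two_ne_zero) (t, x)).comp x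
        (DifferentiableAt.prodMk (differentiableAt_const t) differentiableAt_id)
    have hzbdiff : DifferentiableAt ℝ zb x := (hzb.differentiable two_ne_zero) x
    have hgradsub : gradient (fun y => η t y - zb y) x
        = gradient (fun y => η t y) x - gradient zb x := by
      unfold gradient
      rw [fderiv_fun_sub hηdiff hzbdiff, map_sub]
    rw [hgradsub, hM1.deriv, hM2.fderiv]
    -- transport identity
    have keyφ : fderiv ℝ (Phi d φ) (t, x, l) (1, 0, 0)
        + fderiv ℝ (Phi d φ) (t, x, l) (0, u t x (φ t x l), 0) = w t x (φ t x l) := by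
      have h := hφeq t x l
      rw [hψt.deriv, hψx.fderiv] at h
      simpa using h
    -- Euler identity at z = φ t x l
    have e3 : deriv (fun s => u s x (φ t x l)) t
        = fderiv ℝ (UU d u) (t, x, φ t x l) (1, 0, 0) :=
      (slot1_hasDerivAt _ (hUd _)).deriv
    have e4 : fderiv ℝ (fun y => u t y (φ t x l)) x (u t x (φ t x l))
        = fderiv ℝ (UU d u) (t, x, φ t x l) (0, u t x (φ t x l), 0) :=
      slot2_fderiv_apply _ (hUd _) _
    have e5 : deriv (fun ζ => u t x ζ) (φ t x l)
        = fderiv ℝ (UU d u) (t, x, φ t x l) (0, 0, 1) :=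
      (slot3_hasDerivAt _ (hUd _)).deriv
    have heu := heuler1 t x (φ t x l)
    rw [e3, e4, e5] at heu
    -- expand the two composite derivatives
    have exp1 : fderiv ℝ (UU d u) (t, x, φ t x l)
          (1, 0, fderiv ℝ (Phi d φ) (t, x, l) (1, 0, 0))
        = fderiv ℝ (UU d u) (t, x, φ t x l) (1, 0, 0)
          + fderiv ℝ (Phi d φ) (t, x, l) (1, 0, 0)
            • fderiv ℝ (UU d u) (t, x, φ t x l) (0, 0, 1) := by
      rw [show ((1:ℝ), (0 : EuclideanSpace ℝ (Fin d)),
            fderiv ℝ (Phi d φ) (t, x, l) (1, 0, 0))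
          = ((1:ℝ), (0 : EuclideanSpace ℝ (Fin d)), (0:ℝ))
            + fderiv ℝ (Phi d φ) (t, x, l) (1, 0, 0)
              • ((0:ℝ), (0 : EuclideanSpace ℝ (Fin d)), (1:ℝ)) by
        simp [Prod.ext_iff]]
      rw [map_add, map_smul]
    have exp2 : ((fderiv ℝ (UU d u) (t, x, φ t x l)).comp
          ((0 : _ →L[ℝ] ℝ).prod ((ContinuousLinearMap.id ℝ _).prod
            ((fderiv ℝ (Phi d φ) (t, x, l)).comp
              ((0 : _ →L[ℝ] ℝ).prod ((ContinuousLinearMap.id ℝ _).prod 0))))))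
          (u t x (φ t x l))
        = fderiv ℝ (UU d u) (t, x, φ t x l) (0, u t x (φ t x l), 0)
          + fderiv ℝ (Phi d φ) (t, x, l) (0, u t x (φ t x l), 0)
            • fderiv ℝ (UU d u) (t, x, φ t x l) (0, 0, 1) := by
      simp only [ContinuousLinearMap.comp_apply, ContinuousLinearMap.prod_apply,
        ContinuousLinearMap.coe_id', id_eq, ContinuousLinearMap.zero_apply]
      rw [show ((0:ℝ), u t x (φ t x l),
            fderiv ℝ (Phi d φ) (t, x, l) (0, u t x (φ t x l), 0))
          = ((0:ℝ), u t x (φ t x l), (0:ℝ))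
            + fderiv ℝ (Phi d φ) (t, x, l) (0, u t x (φ t x l), 0)
              • ((0:ℝ), (0 : EuclideanSpace ℝ (Fin d)), (1:ℝ)) by
        simp [Prod.ext_iff]]
      rw [map_add, map_smul]
    rw [exp1, exp2]
    have final : ∀ a b c G1 G2 : EuclideanSpace ℝ (Fin d), ∀ s1 s2 W : ℝ,
        s1 + s2 = W → a + b + W • c + g • G1 = 0 →
        a + s1 • c + (b + s2 • c) + g • (G1 - G2) = -(g • G2) := by
      intro a b c G1 G2 s1 s2 W h1 h2
      have : a + s1 • c + (b + s2 • c) + g • (G1 - G2)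
          = (a + b + (s1 + s2) • c + g • G1) - g • G2 := by module
      rw [this, h1, h2]
      abel
    exact final _ _ _ _ _ _ _ _ keyφ heu
end

section
/- Let g > 0 and z_b : ℝ → ℝ be C¹. Let H, ũ : ℝ × ℝ × (0,1) → ℝ be C² functions with H > 0 everywhere, satisfying for all (t,x,λ) ∈ ℝ × ℝ × (0,1): ∂_t H + ∂_x(H ũ) = 0 and ∂_t ũ + ũ ∂_x ũ + g ∂_x ∫₀¹ H(t,x,λ') dλ' = −g z_b'(x). Then the hydrostatic vorticity ω̃ := (∂_λ ũ)/H satisfies the transport equation ∂_t ω̃ + ũ ∂_x ω̃ = 0 for all (t,x,λ) ∈ ℝ × ℝ × (0,1). -/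
open Set

private lemma line1' (x l t : ℝ) :
    HasDerivAt (fun s : ℝ => ((s, x, l) : ℝ × ℝ × ℝ)) ((1:ℝ), (0:ℝ), (0:ℝ)) t :=
  (hasDerivAt_id t).prodMk ((hasDerivAt_const t x).prodMk (hasDerivAt_const t l))

private lemma line2' (t l x : ℝ) :
    HasDerivAt (fun y : ℝ => ((t, y, l) : ℝ × ℝ × ℝ)) ((0:ℝ), (1:ℝ), (0:ℝ)) x :=
  (hasDerivAt_const x t).prodMk ((hasDerivAt_id x).prodMk (hasDerivAt_const x l))

private lemma line3' (t x l : ℝ) :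
    HasDerivAt (fun m : ℝ => ((t, x, m) : ℝ × ℝ × ℝ)) ((0:ℝ), (0:ℝ), (1:ℝ)) l :=
  (hasDerivAt_const l t).prodMk ((hasDerivAt_const l x).prodMk (hasDerivAt_id l))

private lemma partialD {f : ℝ × ℝ × ℝ → ℝ} {γ : ℝ → ℝ × ℝ × ℝ} {v : ℝ × ℝ × ℝ} {s : ℝ}
    (hf : DifferentiableAt ℝ f (γ s)) (hγ : HasDerivAt γ v s) :
    HasDerivAt (fun r => f (γ r)) (fderiv ℝ f (γ s) v) s :=
  hf.hasFDerivAt.comp_hasDerivAt s hγ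

private lemma mixedD {f : ℝ × ℝ × ℝ → ℝ} {γ : ℝ → ℝ × ℝ × ℝ} {v : ℝ × ℝ × ℝ} {s : ℝ}
    (hf : DifferentiableAt ℝ (fderiv ℝ f) (γ s)) (hγ : HasDerivAt γ v s) (w : ℝ × ℝ × ℝ) :
    HasDerivAt (fun r => fderiv ℝ f (γ r) w) (fderiv ℝ (fderiv ℝ f) (γ s) v w) s := by
  have h1 : HasDerivAt (fun r => fderiv ℝ f (γ r)) (fderiv ℝ (fderiv ℝ f) (γ s) v) s :=
    hf.hasFDerivAt.comp_hasDerivAt s hγ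
  have h2 := (ContinuousLinearMap.apply ℝ ℝ w).hasFDerivAt.comp_hasDerivAt s h1
  exact h2

set_option maxHeartbeats 1000000 in
/-- For the one-dimensional semi-Lagrangian hydrostatic system with
gravity `g > 0` and topography `z_b`, if `H, ũ` are `C²` with `H > 0` and satisfy
`∂ₜH + ∂ₓ(Hũ) = 0` and `∂ₜũ + ũ∂ₓũ + g∂ₓ∫₀¹H dλ' = -g z_b'`, then the hydrostatic
vorticity `ω̃ = (∂_λ ũ)/H` satisfies the transport equation `∂ₜω̃ + ũ ∂ₓω̃ = 0`
on `ℝ × ℝ × (0,1)`. -/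
theorem stmt1 (g : ℝ) (hg : 0 < g) (zb : ℝ → ℝ) (hzb : ContDiff ℝ 1 zb)
    (H u : ℝ → ℝ → ℝ → ℝ)
    (hH : ContDiffOn ℝ 2 (fun p : ℝ × ℝ × ℝ => H p.1 p.2.1 p.2.2)
      (Set.univ ×ˢ (Set.univ ×ˢ Set.Ioo 0 1)))
    (hu : ContDiffOn ℝ 2 (fun p : ℝ × ℝ × ℝ => u p.1 p.2.1 p.2.2)
      (Set.univ ×ˢ (Set.univ ×ˢ Set.Ioo 0 1)))
    (hHpos : ∀ t x : ℝ, ∀ l ∈ Set.Ioo (0:ℝ) 1, 0 < H t x l)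
    (heq1 : ∀ t x : ℝ, ∀ l ∈ Set.Ioo (0:ℝ) 1,
      deriv (fun s => H s x l) t + deriv (fun y => H t y l * u t y l) x = 0)
    (heq2 : ∀ t x : ℝ, ∀ l ∈ Set.Ioo (0:ℝ) 1,
      deriv (fun s => u s x l) t + u t x l * deriv (fun y => u t y l) x
        + g * deriv (fun y => ∫ m in (0:ℝ)..1, H t y m) x = -(g * deriv zb x)) :
    ∀ t x : ℝ, ∀ l ∈ Set.Ioo (0:ℝ) 1,
      deriv (fun s => deriv (fun m => u s x m) l / H s x l) t
        + u t x l * deriv (fun y => deriv (fun m => u t y m) l / H t y l) x = 0 := by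
  intro t x l hl
  set S : Set (ℝ × ℝ × ℝ) := Set.univ ×ˢ (Set.univ ×ˢ Set.Ioo 0 1) with hSdef
  have hSopen : IsOpen S := isOpen_univ.prod (isOpen_univ.prod isOpen_Ioo)
  have memS : ∀ (s y : ℝ) {m : ℝ}, m ∈ Set.Ioo (0:ℝ) 1 → ((s, y, m) : ℝ × ℝ × ℝ) ∈ S :=
    fun s y m hm => ⟨trivial, trivial, hm⟩
  set F : ℝ × ℝ × ℝ → ℝ := fun q => u q.1 q.2.1 q.2.2 with hFdef
  set G : ℝ × ℝ × ℝ → ℝ := fun q => H q.1 q.2.1 q.2.2 with hGdef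
  have diffF : ∀ q ∈ S, DifferentiableAt ℝ F q := fun q hq =>
    (hu.contDiffAt (hSopen.mem_nhds hq)).differentiableAt (by norm_num)
  have diffG : ∀ q ∈ S, DifferentiableAt ℝ G q := fun q hq =>
    (hH.contDiffAt (hSopen.mem_nhds hq)).differentiableAt (by norm_num)
  have hp : ((t, x, l) : ℝ × ℝ × ℝ) ∈ S := memS t x hl
  have dF1 : ContDiffAt ℝ 1 (fderiv ℝ F) (t, x, l) :=
    (hu.contDiffAt (hSopen.mem_nhds hp)).fderiv_right (by norm_num)
  have dF1' : DifferentiableAt ℝ (fderiv ℝ F) (t, x, l) := dF1.differentiableAt one_ne_zero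
  have hev : ∀ᶠ q in nhds ((t, x, l) : ℝ × ℝ × ℝ), HasFDerivAt F (fderiv ℝ F q) q :=
    Filter.eventually_of_mem (hSopen.mem_nhds hp) fun q hq => (diffF q hq).hasFDerivAt
  have hsymm := second_derivative_symmetric_of_eventually hev dF1'.hasFDerivAt
  set A : (ℝ × ℝ × ℝ) →L[ℝ] (ℝ × ℝ × ℝ) →L[ℝ] ℝ := fderiv ℝ (fderiv ℝ F) (t, x, l) with hAdef
  -- step (a): λ-derivative of momentum equation
  have hψ : HasDerivAt
      (fun m => fderiv ℝ F (t, x, m) ((1:ℝ),(0:ℝ),(0:ℝ))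
        + F (t, x, m) * fderiv ℝ F (t, x, m) ((0:ℝ),(1:ℝ),(0:ℝ)))
      (A ((0:ℝ),(0:ℝ),(1:ℝ)) ((1:ℝ),(0:ℝ),(0:ℝ))
        + (fderiv ℝ F (t,x,l) ((0:ℝ),(0:ℝ),(1:ℝ)) * fderiv ℝ F (t,x,l) ((0:ℝ),(1:ℝ),(0:ℝ))
          + F (t,x,l) * A ((0:ℝ),(0:ℝ),(1:ℝ)) ((0:ℝ),(1:ℝ),(0:ℝ)))) l :=
    (mixedD dF1' (line3' t x l) _).add
      ((partialD (diffF _ hp) (line3' t x l)).mul (mixedD dF1' (line3' t x l) _))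
  have htd : ∀ m ∈ Set.Ioo (0:ℝ) 1,
      deriv (fun s => u s x m) t = fderiv ℝ F (t, x, m) ((1:ℝ),(0:ℝ),(0:ℝ)) :=
    fun m hm => (partialD (diffF _ (memS t x hm)) (line1' x m t)).deriv
  have hxd : ∀ m ∈ Set.Ioo (0:ℝ) 1,
      deriv (fun y => u t y m) x = fderiv ℝ F (t, x, m) ((0:ℝ),(1:ℝ),(0:ℝ)) :=
    fun m hm => (partialD (diffF _ (memS t x hm)) (line2' t m x)).deriv
  have hconst : (fun m => fderiv ℝ F (t, x, m) ((1:ℝ),(0:ℝ),(0:ℝ))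
        + F (t, x, m) * fderiv ℝ F (t, x, m) ((0:ℝ),(1:ℝ),(0:ℝ)))
      =ᶠ[nhds l] fun _ => -(g * deriv zb x)
        - g * deriv (fun y => ∫ m in (0:ℝ)..1, H t y m) x := by
    filter_upwards [Ioo_mem_nhds hl.1 hl.2] with m hm
    have h2 := heq2 t x m hm
    rw [htd m hm, hxd m hm] at h2
    have : F (t, x, m) = u t x m := rfl
    rw [this]
    linarith
  have hψ0 : HasDerivAt
      (fun m => fderiv ℝ F (t, x, m) ((1:ℝ),(0:ℝ),(0:ℝ))
        + F (t, x, m) * fderiv ℝ F (t, x, m) ((0:ℝ),(1:ℝ),(0:ℝ))) 0 l :=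
    (hasDerivAt_const l _).congr_of_eventuallyEq hconst
  have key1 : A ((0:ℝ),(0:ℝ),(1:ℝ)) ((1:ℝ),(0:ℝ),(0:ℝ))
      + (fderiv ℝ F (t,x,l) ((0:ℝ),(0:ℝ),(1:ℝ)) * fderiv ℝ F (t,x,l) ((0:ℝ),(1:ℝ),(0:ℝ))
        + u t x l * A ((0:ℝ),(0:ℝ),(1:ℝ)) ((0:ℝ),(1:ℝ),(0:ℝ))) = 0 :=
    hψ.unique hψ0
  -- step (b): mass equation
  have hmass := heq1 t x l hl
  have hHt : deriv (fun s => H s x l) t = fderiv ℝ G (t, x, l) ((1:ℝ),(0:ℝ),(0:ℝ)) :=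
    (partialD (diffG _ hp) (line1' x l t)).deriv
  have hHux : deriv (fun y => H t y l * u t y l) x
      = fderiv ℝ G (t,x,l) ((0:ℝ),(1:ℝ),(0:ℝ)) * u t x l
        + H t x l * fderiv ℝ F (t,x,l) ((0:ℝ),(1:ℝ),(0:ℝ)) :=
    ((partialD (diffG _ hp) (line2' t l x)).mul (partialD (diffF _ hp) (line2' t l x))).deriv
  rw [hHt, hHux] at hmass
  -- step (c): compute the goal
  have hld : ∀ s : ℝ, deriv (fun m => u s x m) l = fderiv ℝ F (s, x, l) ((0:ℝ),(0:ℝ),(1:ℝ)) :=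
    fun s => (partialD (diffF _ (memS s x hl)) (line3' s x l)).deriv
  have hld' : ∀ y : ℝ, deriv (fun m => u t y m) l = fderiv ℝ F (t, y, l) ((0:ℝ),(0:ℝ),(1:ℝ)) :=
    fun y => (partialD (diffF _ (memS t y hl)) (line3' t y l)).deriv
  have e1 : (fun s => deriv (fun m => u s x m) l / H s x l)
      = fun s => fderiv ℝ F (s, x, l) ((0:ℝ),(0:ℝ),(1:ℝ)) / H s x l :=
    funext fun s => by rw [hld s]
  have e2 : (fun y => deriv (fun m => u t y m) l / H t y l)
      = fun y => fderiv ℝ F (t, y, l) ((0:ℝ),(0:ℝ),(1:ℝ)) / H t y l :=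
    funext fun y => by rw [hld' y]
  have hHne : H t x l ≠ 0 := ne_of_gt (hHpos t x l hl)
  have hq1 : HasDerivAt (fun s => fderiv ℝ F (s, x, l) ((0:ℝ),(0:ℝ),(1:ℝ)) / H s x l)
      ((A ((1:ℝ),(0:ℝ),(0:ℝ)) ((0:ℝ),(0:ℝ),(1:ℝ)) * H t x l
        - fderiv ℝ F (t,x,l) ((0:ℝ),(0:ℝ),(1:ℝ)) * fderiv ℝ G (t,x,l) ((1:ℝ),(0:ℝ),(0:ℝ)))
        / H t x l ^ 2) t :=
    (mixedD dF1' (line1' x l t) _).div (partialD (diffG _ hp) (line1' x l t)) hHne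
  have hq2 : HasDerivAt (fun y => fderiv ℝ F (t, y, l) ((0:ℝ),(0:ℝ),(1:ℝ)) / H t y l)
      ((A ((0:ℝ),(1:ℝ),(0:ℝ)) ((0:ℝ),(0:ℝ),(1:ℝ)) * H t x l
        - fderiv ℝ F (t,x,l) ((0:ℝ),(0:ℝ),(1:ℝ)) * fderiv ℝ G (t,x,l) ((0:ℝ),(1:ℝ),(0:ℝ)))
        / H t x l ^ 2) x :=
    (mixedD dF1' (line2' t l x) _).div (partialD (diffG _ hp) (line2' t l x)) hHne
  rw [e1, e2, hq1.deriv, hq2.deriv]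
  rw [hsymm ((1:ℝ),(0:ℝ),(0:ℝ)) ((0:ℝ),(0:ℝ),(1:ℝ)),
    hsymm ((0:ℝ),(1:ℝ),(0:ℝ)) ((0:ℝ),(0:ℝ),(1:ℝ))]
  field_simp
  linear_combination H t x l * key1 - fderiv ℝ F (t,x,l) ((0:ℝ),(0:ℝ),(1:ℝ)) * hmass
end

section
/- Let g > 0. Let F : [0,1] → ℝ be C¹ and G : ℝ → ℝ be C¹ such that F(λ) − G(x) > 0 and F'(λ) > 0 for all (x,λ) ∈ ℝ × [0,1]. Define H(x,λ) = F'(λ)/√(F(λ) − G(x)) and ũ(x,λ) = √(F(λ) − G(x)), and set z_b(x) = G(x)/(2g) − 2√(F(1) − G(x)) + 2√(F(0) − G(x)). Then: (a) ∫₀¹ H(x,λ) dλ = 2√(F(1) − G(x)) − 2√(F(0) − G(x)) for all x; (b) for all (x,λ) ∈ ℝ × (0,1), ∂_x(H ũ) = 0 and ũ ∂_x ũ + g ∂_x ∫₀¹ H(x,λ') dλ' = −g z_b'(x); that is, (H,ũ) is a stationary solution of the one-dimensional semi-Lagrangian hydrostatic system with topography z_b. -/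
/-- Explicit stationary solutions: for `C¹` functions `F, G` with
`F(λ) - G(x) > 0` and `F'(λ) > 0`, setting `H = F'(λ)/√(F(λ)-G(x))`,
`ũ = √(F(λ)-G(x))` and `z_b(x) = G(x)/(2g) - 2√(F(1)-G(x)) + 2√(F(0)-G(x))`, one has
(a) `∫₀¹ H dλ = 2√(F(1)-G(x)) - 2√(F(0)-G(x))`, and (b) `(H, ũ)` is a stationary
solution of the one-dimensional semi-Lagrangian hydrostatic system with topography `z_b`. -/
theorem stmt3 (g : ℝ) (hg : 0 < g) (F G : ℝ → ℝ)
    (hF : ContDiff ℝ 1 F) (hG : ContDiff ℝ 1 G)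
    (hpos : ∀ x : ℝ, ∀ l ∈ Set.Icc (0:ℝ) 1, 0 < F l - G x)
    (hF' : ∀ l ∈ Set.Icc (0:ℝ) 1, 0 < deriv F l) :
    -- (a)
    (∀ x : ℝ, ∫ l in (0:ℝ)..1, deriv F l / Real.sqrt (F l - G x) =
      2 * Real.sqrt (F 1 - G x) - 2 * Real.sqrt (F 0 - G x)) ∧
    -- (b)
    (∀ x : ℝ, ∀ l ∈ Set.Ioo (0:ℝ) 1,
      deriv (fun y => (deriv F l / Real.sqrt (F l - G y)) * Real.sqrt (F l - G y)) x = 0 ∧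
      Real.sqrt (F l - G x) * deriv (fun y => Real.sqrt (F l - G y)) x +
        g * deriv (fun y => ∫ m in (0:ℝ)..1, deriv F m / Real.sqrt (F m - G y)) x =
        -(g * deriv (fun y => G y / (2 * g) - 2 * Real.sqrt (F 1 - G y) +
            2 * Real.sqrt (F 0 - G y)) x)) := by
  have hGd : ∀ x : ℝ, HasDerivAt G (deriv G x) x := fun x =>
    (hG.differentiable one_ne_zero x).hasDerivAt
  have hsub : ∀ (x l : ℝ), HasDerivAt (fun y => F l - G y) (-(deriv G x)) x := by
    intro x l
    simpa using (hGd x).const_sub (F l)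
  have hsq : ∀ (x l : ℝ), 0 < F l - G x → HasDerivAt (fun y => Real.sqrt (F l - G y))
      (-(deriv G x) / (2 * Real.sqrt (F l - G x))) x := fun x l h =>
    (hsub x l).sqrt (ne_of_gt h)
  have parta : ∀ x : ℝ, ∫ l in (0:ℝ)..1, deriv F l / Real.sqrt (F l - G x) =
      2 * Real.sqrt (F 1 - G x) - 2 * Real.sqrt (F 0 - G x) := by
    intro x
    have hderiv : ∀ l ∈ Set.uIcc (0:ℝ) 1,
        HasDerivAt (fun l => 2 * Real.sqrt (F l - G x))
          (deriv F l / Real.sqrt (F l - G x)) l := by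
      intro l hl
      rw [Set.uIcc_of_le zero_le_one] at hl
      have hFl : HasDerivAt F (deriv F l) l := (hF.differentiable one_ne_zero l).hasDerivAt
      have h1 : HasDerivAt (fun m => F m - G x) (deriv F l) l := hFl.sub_const (G x)
      have hp := hpos x l hl
      have h2 := (h1.sqrt (ne_of_gt hp)).const_mul 2
      have hne : Real.sqrt (F l - G x) ≠ 0 := ne_of_gt (Real.sqrt_pos.mpr hp)
      exact h2.congr_deriv (by ring)
    have hcont : ContinuousOn (fun l => deriv F l / Real.sqrt (F l - G x))
        (Set.uIcc (0:ℝ) 1) := by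
      apply ContinuousOn.div
      · exact (hF.continuous_deriv le_rfl).continuousOn
      · exact (Real.continuous_sqrt.comp ((hF.continuous).sub continuous_const)).continuousOn
      · intro l hl
        rw [Set.uIcc_of_le zero_le_one] at hl
        exact ne_of_gt (Real.sqrt_pos.mpr (hpos x l hl))
    have := intervalIntegral.integral_eq_sub_of_hasDerivAt
      (f := fun l => 2 * Real.sqrt (F l - G x)) hderiv
      (hcont.intervalIntegrable)
    simpa using this
  refine ⟨parta, ?_⟩
  intro x l hl
  have hlI : l ∈ Set.Icc (0:ℝ) 1 := Set.mem_Icc_of_Ioo hl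
  have h0 : (0:ℝ) ∈ Set.Icc (0:ℝ) 1 := by constructor <;> norm_num
  have h1 : (1:ℝ) ∈ Set.Icc (0:ℝ) 1 := by constructor <;> norm_num
  constructor
  · have : (fun y => (deriv F l / Real.sqrt (F l - G y)) * Real.sqrt (F l - G y)) =
        fun _ => deriv F l := by
      funext y
      have hne : Real.sqrt (F l - G y) ≠ 0 :=
        ne_of_gt (Real.sqrt_pos.mpr (hpos y l hlI))
      field_simp
    rw [this, deriv_const]
  · have hsl := hsq x l (hpos x l hlI)
    have hs0 := hsq x 0 (hpos x 0 h0)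
    have hs1 := hsq x 1 (hpos x 1 h1)
    have hint : (fun y => ∫ m in (0:ℝ)..1, deriv F m / Real.sqrt (F m - G y)) =
        fun y => 2 * Real.sqrt (F 1 - G y) - 2 * Real.sqrt (F 0 - G y) :=
      funext parta
    have hdint : deriv (fun y => ∫ m in (0:ℝ)..1, deriv F m / Real.sqrt (F m - G y)) x =
        2 * (-(deriv G x) / (2 * Real.sqrt (F 1 - G x))) -
        2 * (-(deriv G x) / (2 * Real.sqrt (F 0 - G x))) := by
      rw [hint]
      exact ((hs1.const_mul 2).sub (hs0.const_mul 2)).deriv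
    have hdzb : deriv (fun y => G y / (2 * g) - 2 * Real.sqrt (F 1 - G y) +
        2 * Real.sqrt (F 0 - G y)) x =
        deriv G x / (2 * g) - 2 * (-(deriv G x) / (2 * Real.sqrt (F 1 - G x))) +
        2 * (-(deriv G x) / (2 * Real.sqrt (F 0 - G x))) :=
      ((((hGd x).div_const (2 * g)).sub (hs1.const_mul 2)).add (hs0.const_mul 2)).deriv
    rw [hsl.deriv, hdint, hdzb]
    have hnel : Real.sqrt (F l - G x) ≠ 0 := ne_of_gt (Real.sqrt_pos.mpr (hpos x l hlI))
    have hne0 : Real.sqrt (F 0 - G x) ≠ 0 := ne_of_gt (Real.sqrt_pos.mpr (hpos x 0 h0))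
    have hne1 : Real.sqrt (F 1 - G x) ≠ 0 := ne_of_gt (Real.sqrt_pos.mpr (hpos x 1 h1))
    field_simp
    ring
end

section
/- Let I = (0,1) with Lebesgue measure μ, g > 0, and ũ, H ∈ L^∞(I;ℝ) with essinf_I H > 0. Then the spectrum of the bounded operator A₀ on L²(I;ℂ)² equals σ(A₀) = ũ[I] ∪ { c ∈ ℂ \ ũ[I] : ∫₀¹ g H(λ)/(c − ũ(λ))² dλ = 1 }, where ũ[I] is the essential range of ũ (note that for c ∉ ũ[I] the function (c − ũ)⁻¹ lies in L^∞(I), so the integral is well defined). -/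
set_option maxHeartbeats 1000000


open MeasureTheory

/-- Lebesgue measure restricted to the interval `I = (0,1)`. -/
noncomputable def μ01 : Measure ℝ := volume.restrict (Set.Ioo 0 1)

instance : IsFiniteMeasure μ01 :=
  ⟨by simp [μ01, Real.volume_Ioo]⟩

lemma μ01_univ : μ01 Set.univ = 1 := by
  simp [μ01, Real.volume_Ioo]

namespace Stmt4

lemma mul2 {f h : ℝ → ℂ} (hf : MemLp f ⊤ μ01) (hh : MemLp h 2 μ01) :
    MemLp (fun x => f x * h x) 2 μ01 := by
  have := hh.smul (r := 2) hf
  exact this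

lemma multop {f h : ℝ → ℂ} (hf : MemLp f ⊤ μ01) (hh : MemLp h ⊤ μ01) :
    MemLp (fun x => f x * h x) ⊤ μ01 := by
  have := hh.smul (r := ⊤) hf
  exact this

lemma mem2 {f : ℝ → ℂ} (h : MemLp f ⊤ μ01) : MemLp f 2 μ01 :=
  h.mono_exponent le_top

lemma int2 {f : ℝ → ℂ} (h : MemLp f 2 μ01) : Integrable f μ01 :=
  h.integrable one_le_two

/-- unpacking the negation of essential-range membership -/
lemma not_essrange {u : ℝ → ℝ} {c : ℂ}
    (hc : ¬ ∀ ε : ℝ, 0 < ε → 0 < μ01 {x | dist ((u x : ℂ)) c < ε}) :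
    ∃ ε : ℝ, 0 < ε ∧ ∀ᵐ x ∂μ01, ε ≤ dist ((u x : ℂ)) c := by
  push_neg at hc
  obtain ⟨ε, hε, h⟩ := hc
  refine ⟨ε, hε, ?_⟩
  rw [ae_iff]
  have h0 : μ01 {x | dist ((u x : ℂ)) c < ε} = 0 := le_antisymm h zero_le
  convert h0 using 2
  ext x
  simp [not_le]


lemma split_set {S : Set ℝ} (hS : MeasurableSet S) (hpos : 0 < μ01 S) :
    ∃ S₁ S₂ : Set ℝ, MeasurableSet S₁ ∧ MeasurableSet S₂ ∧ Disjoint S₁ S₂ ∧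
      S₁ ⊆ S ∧ S₂ ⊆ S ∧ 0 < μ01 S₁ ∧ 0 < μ01 S₂ := by
  set f : ℝ → ℝ := fun t => (μ01 (S ∩ Set.Iic t)).toReal with hf
  have hfin : ∀ t, μ01 (S ∩ Set.Iic t) ≠ ⊤ := fun t => measure_ne_top _ _
  have hmono : Monotone f := by
    intro a b hab
    exact ENNReal.toReal_mono (hfin b)
      (measure_mono (Set.inter_subset_inter_right _ (Set.Iic_subset_Iic.2 hab)))
  have hstep : ∀ a b : ℝ, a ≤ b → f b ≤ f a + (b - a) := by
    intro a b hab
    have h1 : μ01 (S ∩ Set.Iic b) ≤ μ01 (S ∩ Set.Iic a) + μ01 (Set.Ioc a b) := by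
      refine le_trans (measure_mono ?_) (measure_union_le _ _)
      intro x ⟨hxS, hxb⟩
      rcases le_or_gt x a with h | h
      · exact Or.inl ⟨hxS, h⟩
      · exact Or.inr ⟨h, hxb⟩
    have h2 : μ01 (Set.Ioc a b) ≤ ENNReal.ofReal (b - a) := by
      have : μ01 (Set.Ioc a b) ≤ volume (Set.Ioc a b) := by
        rw [μ01, Measure.restrict_apply measurableSet_Ioc]
        exact measure_mono Set.inter_subset_left
      simpa [Real.volume_Ioc] using this
    calc f b ≤ ((μ01 (S ∩ Set.Iic a)) + ENNReal.ofReal (b - a)).toReal :=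
          ENNReal.toReal_mono (by finiteness) (h1.trans (add_le_add_right h2 _))
      _ = f a + (b - a) := by
          rw [ENNReal.toReal_add (hfin a) ENNReal.ofReal_ne_top,
            ENNReal.toReal_ofReal (by linarith)]
  have hlip : LipschitzWith 1 f := by
    refine LipschitzWith.of_dist_le_mul fun a b => ?_
    rw [Real.dist_eq, Real.dist_eq, NNReal.coe_one, one_mul]
    rcases le_total a b with h | h
    · rw [abs_sub_comm, abs_of_nonneg (by linarith [hmono h] : (0:ℝ) ≤ f b - f a),
        abs_sub_comm, abs_of_nonneg (by linarith)]
      linarith [hstep a b h]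
    · rw [abs_of_nonneg (by linarith [hmono h] : (0:ℝ) ≤ f a - f b),
        abs_of_nonneg (by linarith)]
      linarith [hstep b a h]
  have hf0 : f 0 = 0 := by
    have : μ01 (S ∩ Set.Iic 0) = 0 := by
      have hle : μ01 (S ∩ Set.Iic 0) ≤ volume (Set.Iic (0:ℝ) ∩ Set.Ioo 0 1) := by
        rw [μ01, Measure.restrict_apply (hS.inter measurableSet_Iic)]
        exact measure_mono (Set.inter_subset_inter_left _ Set.inter_subset_right)
      have h0 : Set.Iic (0:ℝ) ∩ Set.Ioo 0 1 = ∅ := by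
        ext x; simp only [Set.mem_inter_iff, Set.mem_Iic, Set.mem_Ioo, Set.mem_empty_iff_false]
        exact ⟨fun ⟨h1, h2, _⟩ => by linarith, False.elim⟩
      rw [h0] at hle; simpa using hle
    simp [hf, this]
  have hf1 : f 1 = (μ01 S).toReal := by
    have hd : μ01 (S \ Set.Iic 1) = 0 := by
      have hle : μ01 (S \ Set.Iic 1) ≤ volume (Set.Ioi (1:ℝ) ∩ Set.Ioo 0 1) := by
        rw [μ01, Measure.restrict_apply (hS.diff measurableSet_Iic)]
        refine measure_mono (Set.inter_subset_inter_left _ fun x hx => ?_)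
        simpa [Set.mem_Ioi] using not_le.mp hx.2
      have h0 : Set.Ioi (1:ℝ) ∩ Set.Ioo 0 1 = ∅ := by
        ext x; simp only [Set.mem_inter_iff, Set.mem_Ioi, Set.mem_Ioo, Set.mem_empty_iff_false]
        exact ⟨fun ⟨h1, h2, h3⟩ => by linarith, False.elim⟩
      rw [h0] at hle; simpa using hle
    have := measure_inter_add_diff S (measurableSet_Iic (a := (1:ℝ))) (μ := μ01)
    rw [hd, add_zero] at this
    simp [hf, this]
  set m : ℝ := (μ01 S).toReal with hm
  have hmpos : 0 < m := ENNReal.toReal_pos hpos.ne' (measure_ne_top _ _)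
  have hmem : m / 2 ∈ Set.Icc (f 0) (f 1) := by
    rw [hf0, hf1]; constructor <;> [positivity; linarith]
  obtain ⟨t, -, htval⟩ := intermediate_value_Icc zero_le_one hlip.continuous.continuousOn hmem
  refine ⟨S ∩ Set.Iic t, S \ Set.Iic t, hS.inter measurableSet_Iic, hS.diff measurableSet_Iic,
    Set.disjoint_left.2 fun x hx hx' => hx'.2 hx.2, Set.inter_subset_left,
    Set.diff_subset, ?_, ?_⟩
  · by_contra h
    have h0 : μ01 (S ∩ Set.Iic t) = 0 := by simpa [not_lt, le_zero_iff] using h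
    have hft : f t = 0 := by simp [hf, h0]
    rw [htval] at hft
    linarith
  · by_contra h
    have h0 : μ01 (S \ Set.Iic t) = 0 := by simpa [not_lt, le_zero_iff] using h
    have hsum := measure_inter_add_diff S (measurableSet_Iic (a := t)) (μ := μ01)
    rw [h0, add_zero] at hsum
    have : f t = m := by rw [hf]; simp only; rw [hsum]
    rw [htval] at this
    linarith

variable {g : ℝ} {u H : ℝ → ℝ} {c : ℂ} {ε : ℝ}

lemma v_cancel (hε : 0 < ε) (hae : ∀ᵐ x ∂μ01, ε ≤ dist ((u x : ℂ)) c) :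
    ∀ᵐ x ∂μ01, (c - (u x : ℂ)) * (c - (u x : ℂ))⁻¹ = 1 := by
  filter_upwards [hae] with x hx
  have hne : c - (u x : ℂ) ≠ 0 := by
    intro h
    rw [sub_eq_zero] at h
    rw [dist_eq_norm, ← h] at hx
    simp at hx
    linarith
  exact mul_inv_cancel₀ hne

lemma v_memtop (hu : MemLp u ⊤ μ01) (hε : 0 < ε)
    (hae : ∀ᵐ x ∂μ01, ε ≤ dist ((u x : ℂ)) c) :
    MemLp (fun x => (c - (u x : ℂ))⁻¹) ⊤ μ01 := by
  have hmeas : AEStronglyMeasurable (fun x => (c - (u x : ℂ))⁻¹) μ01 := by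
    have h1 : AEMeasurable (fun x => c - (u x : ℂ)) μ01 :=
      aemeasurable_const.sub (Complex.measurable_ofReal.comp_aemeasurable hu.1.aemeasurable)
    exact h1.inv.aestronglyMeasurable
  refine memLp_top_of_bound hmeas ε⁻¹ ?_
  filter_upwards [hae] with x hx
  rw [norm_inv]
  have h1 : ε ≤ ‖c - (u x : ℂ)‖ := by
    rwa [dist_eq_norm, norm_sub_rev] at hx
  exact inv_anti₀ hε h1


lemma not_mem_spectrum (hu : MemLp u ⊤ μ01) (hH : MemLp H ⊤ μ01)
    (A : (Lp ℂ 2 μ01 × Lp ℂ 2 μ01) →L[ℂ] (Lp ℂ 2 μ01 × Lp ℂ 2 μ01))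
    (hA : ∀ φ : Lp ℂ 2 μ01 × Lp ℂ 2 μ01,
      ((A φ).1 : ℝ → ℂ) =ᵐ[μ01]
        (fun x => (u x : ℂ) * (φ.1 : ℝ → ℂ) x + (H x : ℂ) * (φ.2 : ℝ → ℂ) x) ∧
      ((A φ).2 : ℝ → ℂ) =ᵐ[μ01]
        (fun x => (g : ℂ) * (∫ y, (φ.1 : ℝ → ℂ) y ∂μ01) + (u x : ℂ) * (φ.2 : ℝ → ℂ) x))
    (hε : 0 < ε) (hae : ∀ᵐ x ∂μ01, ε ≤ dist ((u x : ℂ)) c)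
    (hFne : ∫ x, (g : ℂ) * (H x : ℂ) / (c - (u x : ℂ)) ^ 2 ∂μ01 ≠ 1) :
    c ∉ spectrum ℂ A := by
  set v : ℝ → ℂ := fun x => (c - (u x : ℂ))⁻¹ with hvdef
  have hvtop : MemLp v ⊤ μ01 := v_memtop hu hε hae
  have hvone : ∀ᵐ x ∂μ01, (c - (u x : ℂ)) * v x = 1 := v_cancel hε hae
  have hHC : MemLp (fun x => (H x : ℂ)) ⊤ μ01 := hH.ofReal
  have hHv2 : MemLp (fun x => (H x : ℂ) * v x ^ 2) ⊤ μ01 := by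
    have h2 : MemLp (fun x => v x * v x) ⊤ μ01 := multop hvtop hvtop
    have h3 := multop hHC h2
    simpa [sq] using h3
  set Fv : ℂ := ∫ x, (H x : ℂ) * v x ^ 2 ∂μ01 with hFv
  have hFveq : ∫ x, (g : ℂ) * (H x : ℂ) / (c - (u x : ℂ)) ^ 2 ∂μ01 = (g : ℂ) * Fv := by
    calc ∫ x, (g : ℂ) * (H x : ℂ) / (c - (u x : ℂ)) ^ 2 ∂μ01
        = ∫ x, (g : ℂ) • ((H x : ℂ) * v x ^ 2) ∂μ01 := by
          congr 1; funext x
          simp only [hvdef, smul_eq_mul, div_eq_mul_inv, inv_pow, mul_assoc]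
      _ = (g : ℂ) * Fv := by rw [integral_smul, hFv, smul_eq_mul]
  have hFv1 : (g : ℂ) * Fv ≠ 1 := by rwa [hFveq] at hFne
  have h1F : (1 : ℂ) - (g : ℂ) * Fv ≠ 0 := sub_ne_zero.mpr (Ne.symm hFv1)
  rw [spectrum.notMem_iff, ContinuousLinearMap.isUnit_iff_bijective]
  set T := algebraMap ℂ ((Lp ℂ 2 μ01 × Lp ℂ 2 μ01) →L[ℂ] (Lp ℂ 2 μ01 × Lp ℂ 2 μ01)) c - A
    with hTdef
  have hT : ∀ φ, T φ = c • φ - A φ := by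
    intro φ
    simp [hTdef, Algebra.algebraMap_eq_smul_one, ContinuousLinearMap.sub_apply,
      ContinuousLinearMap.smul_apply, ContinuousLinearMap.one_apply]
  constructor
  · -- injective
    have hker : ∀ φ : Lp ℂ 2 μ01 × Lp ℂ 2 μ01, T φ = 0 → φ = 0 := by
      intro φ hφ
      obtain ⟨hA1, hA2⟩ := hA φ
      set J : ℂ := ∫ y, (φ.1 : ℝ → ℂ) y ∂μ01 with hJ
      have h0 : c • φ - A φ = 0 := by rw [← hT]; exact hφ
      have e1 : (A φ).1 = c • φ.1 := by
        have h := congrArg Prod.fst h0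
        simp only [Prod.fst_sub, Prod.smul_fst, Prod.fst_zero, sub_eq_zero] at h
        exact h.symm
      have e2 : (A φ).2 = c • φ.2 := by
        have h := congrArg Prod.snd h0
        simp only [Prod.snd_sub, Prod.smul_snd, Prod.snd_zero, sub_eq_zero] at h
        exact h.symm
      have e1' : (fun x => (u x : ℂ) * (φ.1 : ℝ → ℂ) x + (H x : ℂ) * (φ.2 : ℝ → ℂ) x)
          =ᵐ[μ01] fun x => c * (φ.1 : ℝ → ℂ) x := by
        have h := hA1.symm.trans ((e1 ▸ Filter.EventuallyEq.rfl : ⇑(A φ).1 =ᵐ[μ01] ⇑(c • φ.1)).trans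
          (Lp.coeFn_smul c φ.1))
        filter_upwards [h] with x hx
        simpa [smul_eq_mul] using hx
      have e2' : (fun x => (g : ℂ) * J + (u x : ℂ) * (φ.2 : ℝ → ℂ) x)
          =ᵐ[μ01] fun x => c * (φ.2 : ℝ → ℂ) x := by
        have h := hA2.symm.trans ((e2 ▸ Filter.EventuallyEq.rfl : ⇑(A φ).2 =ᵐ[μ01] ⇑(c • φ.2)).trans
          (Lp.coeFn_smul c φ.2))
        filter_upwards [h] with x hx
        simpa [smul_eq_mul, ← hJ] using hx
      have key : ∀ᵐ x ∂μ01, (φ.1 : ℝ → ℂ) x = J * ((g : ℂ) * ((H x : ℂ) * v x ^ 2)) ∧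
          (φ.2 : ℝ → ℂ) x = (g : ℂ) * J * v x := by
        filter_upwards [e1', e2', hvone] with x hx1 hx2 hvx
        have hp2 : (φ.2 : ℝ → ℂ) x = (g : ℂ) * J * v x := by
          linear_combination (-(v x)) * hx2 - (φ.2 : ℝ → ℂ) x * hvx
        refine ⟨?_, hp2⟩
        linear_combination (-(v x)) * hx1 - (φ.1 : ℝ → ℂ) x * hvx + (H x : ℂ) * v x * hp2
      have hJval : J = J * ((g : ℂ) * Fv) := by
        conv_lhs => rw [hJ, integral_congr_ae (key.mono fun x hx => hx.1)]
        calc ∫ x, J * ((g : ℂ) * ((H x : ℂ) * v x ^ 2)) ∂μ01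
            = ∫ x, (J * (g : ℂ)) • ((H x : ℂ) * v x ^ 2) ∂μ01 := by
              congr 1; funext x; simp only [smul_eq_mul]; ring
          _ = (J * (g : ℂ)) • Fv := by rw [integral_smul, hFv]
          _ = J * ((g : ℂ) * Fv) := by simp only [smul_eq_mul]; ring
      have hJ0 : J = 0 := by
        have h2 : J * (1 - (g : ℂ) * Fv) = 0 := by linear_combination hJval
        rcases mul_eq_zero.mp h2 with h | h
        · exact h
        · exact absurd h h1F
      have hp1 : (φ.1 : ℝ → ℂ) =ᵐ[μ01] 0 := by
        filter_upwards [key] with x hx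
        simp [hx.1, hJ0]
      have hp2 : (φ.2 : ℝ → ℂ) =ᵐ[μ01] 0 := by
        filter_upwards [key] with x hx
        simp [hx.2, hJ0]
      have hz1 : φ.1 = 0 := Lp.ext (hp1.trans (Lp.coeFn_zero ℂ 2 μ01).symm)
      have hz2 : φ.2 = 0 := Lp.ext (hp2.trans (Lp.coeFn_zero ℂ 2 μ01).symm)
      exact Prod.ext_iff.mpr ⟨by simpa using hz1, by simpa using hz2⟩
    intro a b hab
    have h : T (a - b) = 0 := by rw [map_sub, hab, sub_self]
    exact sub_eq_zero.mp (hker _ h)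
  · -- surjective
    intro ψ
    set f0 : ℝ → ℂ :=
      fun x => v x * (ψ.1 : ℝ → ℂ) x + (H x : ℂ) * v x ^ 2 * (ψ.2 : ℝ → ℂ) x with hf0
    have hmemf0 : MemLp f0 2 μ01 := by
      have h1 : MemLp (fun x => v x * (ψ.1 : ℝ → ℂ) x) 2 μ01 := mul2 hvtop (Lp.memLp ψ.1)
      have h2 : MemLp (fun x => (H x : ℂ) * v x ^ 2 * (ψ.2 : ℝ → ℂ) x) 2 μ01 :=
        mul2 hHv2 (Lp.memLp ψ.2)
      exact h1.add h2
    set T0 : ℂ := ∫ x, f0 x ∂μ01 with hT0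
    set J : ℂ := T0 / (1 - (g : ℂ) * Fv) with hJdef
    clear_value J
    have hmemJg : MemLp (fun x => (J * (g : ℂ)) * ((H x : ℂ) * v x ^ 2)) ⊤ μ01 :=
      multop (memLp_const _) hHv2
    set φ1 : ℝ → ℂ := fun x => f0 x + (J * (g : ℂ)) * ((H x : ℂ) * v x ^ 2) with hφ1
    set φ2 : ℝ → ℂ := fun x => v x * (ψ.2 : ℝ → ℂ) x + ((g : ℂ) * J) * v x with hφ2
    have hmem1 : MemLp φ1 2 μ01 := hmemf0.add (mem2 hmemJg)
    have hmem2 : MemLp φ2 2 μ01 := by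
      have h1 : MemLp (fun x => v x * (ψ.2 : ℝ → ℂ) x) 2 μ01 := mul2 hvtop (Lp.memLp ψ.2)
      have h2 : MemLp (fun x => ((g : ℂ) * J) * v x) ⊤ μ01 := multop (memLp_const _) hvtop
      exact h1.add (mem2 h2)
    set Φ : Lp ℂ 2 μ01 × Lp ℂ 2 μ01 := (hmem1.toLp φ1, hmem2.toLp φ2) with hΦ
    have hcoe1 : (Φ.1 : ℝ → ℂ) =ᵐ[μ01] φ1 := hmem1.coeFn_toLp
    have hcoe2 : (Φ.2 : ℝ → ℂ) =ᵐ[μ01] φ2 := hmem2.coeFn_toLp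
    have hJint : ∫ y, (Φ.1 : ℝ → ℂ) y ∂μ01 = J := by
      rw [integral_congr_ae hcoe1]
      have hsplit : ∫ x, φ1 x ∂μ01
          = T0 + ∫ x, (J * (g : ℂ)) * ((H x : ℂ) * v x ^ 2) ∂μ01 := by
        rw [hT0]
        exact integral_add (int2 hmemf0) (int2 (mem2 hmemJg))
      have h2 : ∫ x, (J * (g : ℂ)) * ((H x : ℂ) * v x ^ 2) ∂μ01 = (J * (g : ℂ)) * Fv := by
        calc ∫ x, (J * (g : ℂ)) * ((H x : ℂ) * v x ^ 2) ∂μ01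
            = ∫ x, (J * (g : ℂ)) • ((H x : ℂ) * v x ^ 2) ∂μ01 := rfl
          _ = (J * (g : ℂ)) • Fv := by rw [integral_smul, hFv]
          _ = (J * (g : ℂ)) * Fv := rfl
      rw [hsplit, h2]
      have h3 : J * (1 - (g : ℂ) * Fv) = T0 := by rw [hJdef]; exact div_mul_cancel₀ _ h1F
      linear_combination -h3
    refine ⟨Φ, ?_⟩
    have hTΦ : T Φ = c • Φ - A Φ := hT Φ
    obtain ⟨hA1, hA2⟩ := hA Φ
    have hc1 : (T Φ).1 = ψ.1 := by
      have heq : (T Φ).1 = c • Φ.1 - (A Φ).1 := by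
        rw [hTΦ]; simp [Prod.fst_sub, Prod.smul_fst]
      rw [heq]
      refine Lp.ext ?_
      have hsub := Lp.coeFn_sub (c • Φ.1) ((A Φ).1)
      have hsmul := Lp.coeFn_smul c Φ.1
      filter_upwards [hsub, hsmul, hA1, hcoe1, hcoe2, hvone] with x h1 h2 h3 h4 h5 hvx
      rw [h1, Pi.sub_apply, h2, Pi.smul_apply, smul_eq_mul, h3, h4, h5]
      simp only [hφ1, hφ2, hf0]
      linear_combination ((ψ.1 : ℝ → ℂ) x + (H x : ℂ) * v x * (ψ.2 : ℝ → ℂ) x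
        + J * (g : ℂ) * (H x : ℂ) * v x) * hvx
    have hc2 : (T Φ).2 = ψ.2 := by
      have heq : (T Φ).2 = c • Φ.2 - (A Φ).2 := by
        rw [hTΦ]; simp [Prod.snd_sub, Prod.smul_snd]
      rw [heq]
      refine Lp.ext ?_
      have hsub := Lp.coeFn_sub (c • Φ.2) ((A Φ).2)
      have hsmul := Lp.coeFn_smul c Φ.2
      filter_upwards [hsub, hsmul, hA2, hcoe2, hvone] with x h1 h2 h3 h5 hvx
      rw [h1, Pi.sub_apply, h2, Pi.smul_apply, smul_eq_mul, h3, hJint, h5]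
      simp only [hφ2]
      linear_combination ((ψ.2 : ℝ → ℂ) x + (g : ℂ) * J) * hvx
    exact Prod.ext_iff.mpr ⟨hc1, hc2⟩

lemma mem_spectrum_of_eq_one (hg : 0 < g) (hu : MemLp u ⊤ μ01) (hH : MemLp H ⊤ μ01)
    (A : (Lp ℂ 2 μ01 × Lp ℂ 2 μ01) →L[ℂ] (Lp ℂ 2 μ01 × Lp ℂ 2 μ01))
    (hA : ∀ φ : Lp ℂ 2 μ01 × Lp ℂ 2 μ01,
      ((A φ).1 : ℝ → ℂ) =ᵐ[μ01]
        (fun x => (u x : ℂ) * (φ.1 : ℝ → ℂ) x + (H x : ℂ) * (φ.2 : ℝ → ℂ) x) ∧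
      ((A φ).2 : ℝ → ℂ) =ᵐ[μ01]
        (fun x => (g : ℂ) * (∫ y, (φ.1 : ℝ → ℂ) y ∂μ01) + (u x : ℂ) * (φ.2 : ℝ → ℂ) x))
    (hε : 0 < ε) (hae : ∀ᵐ x ∂μ01, ε ≤ dist ((u x : ℂ)) c)
    (hFeq : ∫ x, (g : ℂ) * (H x : ℂ) / (c - (u x : ℂ)) ^ 2 ∂μ01 = 1) :
    c ∈ spectrum ℂ A := by
  set v : ℝ → ℂ := fun x => (c - (u x : ℂ))⁻¹ with hvdef
  have hvtop : MemLp v ⊤ μ01 := v_memtop hu hε hae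
  have hvone : ∀ᵐ x ∂μ01, (c - (u x : ℂ)) * v x = 1 := v_cancel hε hae
  have hHC : MemLp (fun x => (H x : ℂ)) ⊤ μ01 := hH.ofReal
  have hHv2 : MemLp (fun x => (H x : ℂ) * v x ^ 2) ⊤ μ01 := by
    have h2 : MemLp (fun x => v x * v x) ⊤ μ01 := multop hvtop hvtop
    have h3 := multop hHC h2
    simpa [sq] using h3
  set Fv : ℂ := ∫ x, (H x : ℂ) * v x ^ 2 ∂μ01 with hFv
  have hFveq : ∫ x, (g : ℂ) * (H x : ℂ) / (c - (u x : ℂ)) ^ 2 ∂μ01 = (g : ℂ) * Fv := by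
    calc ∫ x, (g : ℂ) * (H x : ℂ) / (c - (u x : ℂ)) ^ 2 ∂μ01
        = ∫ x, (g : ℂ) • ((H x : ℂ) * v x ^ 2) ∂μ01 := by
          congr 1; funext x
          simp only [hvdef, smul_eq_mul, div_eq_mul_inv, inv_pow, mul_assoc]
      _ = (g : ℂ) * Fv := by rw [integral_smul, hFv, smul_eq_mul]
  have hFv1 : (g : ℂ) * Fv = 1 := by rwa [hFveq] at hFeq
  set φ1 : ℝ → ℂ := fun x => (g : ℂ) * ((H x : ℂ) * v x ^ 2) with hφ1
  set φ2 : ℝ → ℂ := fun x => (g : ℂ) * v x with hφ2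
  have hmem1 : MemLp φ1 2 μ01 := mem2 (multop (memLp_const _) hHv2)
  have hmem2 : MemLp φ2 2 μ01 := mem2 (multop (memLp_const _) hvtop)
  set Φ : Lp ℂ 2 μ01 × Lp ℂ 2 μ01 := (hmem1.toLp φ1, hmem2.toLp φ2) with hΦ
  have hcoe1 : (Φ.1 : ℝ → ℂ) =ᵐ[μ01] φ1 := hmem1.coeFn_toLp
  have hcoe2 : (Φ.2 : ℝ → ℂ) =ᵐ[μ01] φ2 := hmem2.coeFn_toLp
  have hJ : ∫ y, (Φ.1 : ℝ → ℂ) y ∂μ01 = 1 := by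
    rw [integral_congr_ae hcoe1]
    calc ∫ x, φ1 x ∂μ01 = ∫ x, (g : ℂ) • ((H x : ℂ) * v x ^ 2) ∂μ01 := rfl
      _ = (g : ℂ) * Fv := by rw [integral_smul, hFv, smul_eq_mul]
      _ = 1 := hFv1
  obtain ⟨hA1, hA2⟩ := hA Φ
  have hc1 : (A Φ).1 = c • Φ.1 := by
    refine Lp.ext ?_
    filter_upwards [hA1, Lp.coeFn_smul c Φ.1, hcoe1, hcoe2, hvone] with x h1 h2 h3 h4 hvx
    rw [h1, h2, Pi.smul_apply, smul_eq_mul, h3, h4]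
    simp only [hφ1, hφ2]
    linear_combination (-(g : ℂ) * (H x : ℂ) * v x) * hvx
  have hc2 : (A Φ).2 = c • Φ.2 := by
    refine Lp.ext ?_
    filter_upwards [hA2, Lp.coeFn_smul c Φ.2, hcoe2, hvone] with x h1 h2 h4 hvx
    rw [h1, hJ, h2, Pi.smul_apply, smul_eq_mul, h4]
    simp only [hφ2]
    linear_combination (-(g : ℂ)) * hvx
  have hAΦ : A Φ = c • Φ := by
    refine Prod.ext_iff.mpr ⟨?_, ?_⟩
    · simpa [Prod.smul_fst] using hc1
    · simpa [Prod.smul_snd] using hc2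
  have hΦne : Φ ≠ 0 := by
    intro h
    have h2 : Φ.2 = 0 := by rw [h]; rfl
    have hz : (Φ.2 : ℝ → ℂ) =ᵐ[μ01] 0 := by
      rw [h2]; exact Lp.coeFn_zero ℂ 2 μ01
    have hfalse : ∀ᵐ _x ∂μ01, False := by
      filter_upwards [hcoe2.symm.trans hz, hvone] with x hx hvx
      simp only [hφ2, Pi.zero_apply] at hx
      rcases mul_eq_zero.mp hx with h' | h'
      · exact (Complex.ofReal_ne_zero.mpr hg.ne') h'
      · rw [h', mul_zero] at hvx; exact zero_ne_one hvx
    rw [ae_iff] at hfalse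
    simp only [not_false_eq_true, Set.setOf_true] at hfalse
    rw [μ01_univ] at hfalse
    exact one_ne_zero hfalse
  rw [spectrum.mem_iff]
  intro hUnit
  have hbij := ContinuousLinearMap.isUnit_iff_bijective.mp hUnit
  have h0 : (algebraMap ℂ ((Lp ℂ 2 μ01 × Lp ℂ 2 μ01) →L[ℂ] (Lp ℂ 2 μ01 × Lp ℂ 2 μ01)) c - A) Φ
      = 0 := by
    rw [ContinuousLinearMap.sub_apply, Algebra.algebraMap_eq_smul_one,
      ContinuousLinearMap.smul_apply, ContinuousLinearMap.one_apply, hAΦ, sub_self]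
  have hz := hbij.1 (a₁ := Φ) (a₂ := 0) (by rw [h0, map_zero])
  exact hΦne hz

lemma mem_spectrum_of_essrange (hu : MemLp u ⊤ μ01) (hH : MemLp H ⊤ μ01)
    (A : (Lp ℂ 2 μ01 × Lp ℂ 2 μ01) →L[ℂ] (Lp ℂ 2 μ01 × Lp ℂ 2 μ01))
    (hA : ∀ φ : Lp ℂ 2 μ01 × Lp ℂ 2 μ01,
      ((A φ).1 : ℝ → ℂ) =ᵐ[μ01]
        (fun x => (u x : ℂ) * (φ.1 : ℝ → ℂ) x + (H x : ℂ) * (φ.2 : ℝ → ℂ) x) ∧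
      ((A φ).2 : ℝ → ℂ) =ᵐ[μ01]
        (fun x => (g : ℂ) * (∫ y, (φ.1 : ℝ → ℂ) y ∂μ01) + (u x : ℂ) * (φ.2 : ℝ → ℂ) x))
    (hc : ∀ ε : ℝ, 0 < ε → 0 < μ01 {x | dist ((u x : ℂ)) c < ε}) :
    c ∈ spectrum ℂ A := by
  by_contra hcon
  rw [spectrum.notMem_iff] at hcon
  obtain ⟨U, hU⟩ := hcon
  set T := algebraMap ℂ ((Lp ℂ 2 μ01 × Lp ℂ 2 μ01) →L[ℂ] (Lp ℂ 2 μ01 × Lp ℂ 2 μ01)) c - A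
    with hTdef
  set B : (Lp ℂ 2 μ01 × Lp ℂ 2 μ01) →L[ℂ] (Lp ℂ 2 μ01 × Lp ℂ 2 μ01) := ↑U⁻¹ with hBdef
  have hB : ∀ φ, B (T φ) = φ := by
    intro φ
    have h1 : B (T φ) = ((↑U⁻¹ * ↑U : (Lp ℂ 2 μ01 × Lp ℂ 2 μ01) →L[ℂ]
        (Lp ℂ 2 μ01 × Lp ℂ 2 μ01))) φ := by rw [hU]; rfl
    rw [h1, U.inv_mul]; rfl
  set ε : ℝ := (2 * (‖B‖ + 1))⁻¹ with hεdef
  have hεpos : 0 < ε := by rw [hεdef]; positivity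
  have hBε : ‖B‖ * ε < 1 := by
    rw [hεdef, show (2 * (‖B‖ + 1))⁻¹ = 1 / (2 * (‖B‖ + 1)) by ring, mul_one_div,
      div_lt_one (by positivity)]
    nlinarith [norm_nonneg B]
  obtain ⟨u', hu'sm, huu'⟩ := hu.1
  set S : Set ℝ := {x | dist ((u' x : ℂ)) c < ε} with hSdef
  have hSmeas : MeasurableSet S := by
    have h : Measurable fun x => dist ((u' x : ℂ)) c :=
      (Complex.measurable_ofReal.comp hu'sm.measurable).dist measurable_const
    exact measurableSet_lt h measurable_const
  have hSpos : 0 < μ01 S := by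
    have hsets : {x | dist ((u x : ℂ)) c < ε} =ᵐ[μ01] S := by
      rw [Filter.eventuallyEq_set]
      filter_upwards [huu'] with x hx
      rw [hSdef]
      simp [hx]
    rw [← measure_congr hsets]
    exact hc ε hεpos
  obtain ⟨S₁, S₂, hS₁m, hS₂m, hdisj, hS₁sub, hS₂sub, hpos₁, hpos₂⟩ := split_set hSmeas hSpos
  set a₁ : ℝ := (μ01 S₁).toReal with ha₁def
  set a₂ : ℝ := (μ01 S₂).toReal with ha₂def
  have ha₁ : 0 < a₁ := ENNReal.toReal_pos hpos₁.ne' (measure_ne_top _ _)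
  have ha₂ : 0 < a₂ := ENNReal.toReal_pos hpos₂.ne' (measure_ne_top _ _)
  set φ1 : ℝ → ℂ :=
    (S₁.indicator fun _ => ((a₂ : ℂ))) - (S₂.indicator fun _ => ((a₁ : ℂ))) with hφ1def
  have hmem1 : MemLp φ1 2 μ01 :=
    (memLp_indicator_const 2 hS₁m _ (Or.inr (measure_ne_top _ _))).sub
      (memLp_indicator_const 2 hS₂m _ (Or.inr (measure_ne_top _ _)))
  have hint0 : ∫ x, φ1 x ∂μ01 = 0 := by
    have h1 : Integrable (S₁.indicator fun _ => ((a₂ : ℂ))) μ01 :=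
      int2 (memLp_indicator_const 2 hS₁m _ (Or.inr (measure_ne_top _ _)))
    have h2 : Integrable (S₂.indicator fun _ => ((a₁ : ℂ))) μ01 :=
      int2 (memLp_indicator_const 2 hS₂m _ (Or.inr (measure_ne_top _ _)))
    have : ∫ x, φ1 x ∂μ01 = (∫ x, (S₁.indicator fun _ => ((a₂ : ℂ))) x ∂μ01)
        - ∫ x, (S₂.indicator fun _ => ((a₁ : ℂ))) x ∂μ01 := by
      rw [hφ1def]
      exact integral_sub h1 h2
    rw [this, integral_indicator_const _ hS₁m, integral_indicator_const _ hS₂m,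
      measureReal_def, measureReal_def, ← ha₁def, ← ha₂def]
    rw [Complex.real_smul, Complex.real_smul]
    ring
  set Φ : Lp ℂ 2 μ01 × Lp ℂ 2 μ01 := (hmem1.toLp φ1, (0 : Lp ℂ 2 μ01)) with hΦdef
  have hcoe1 : (Φ.1 : ℝ → ℂ) =ᵐ[μ01] φ1 := hmem1.coeFn_toLp
  have hJ : ∫ y, (Φ.1 : ℝ → ℂ) y ∂μ01 = 0 := by
    rw [integral_congr_ae hcoe1]; exact hint0
  obtain ⟨hA1, hA2⟩ := hA Φ
  have hTapp : T Φ = c • Φ - A Φ := by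
    simp [hTdef, Algebra.algebraMap_eq_smul_one, ContinuousLinearMap.sub_apply,
      ContinuousLinearMap.smul_apply, ContinuousLinearMap.one_apply]
  have hT2 : (T Φ).2 = 0 := by
    have heq : (T Φ).2 = c • Φ.2 - (A Φ).2 := by
      rw [hTapp]; simp [Prod.snd_sub, Prod.smul_snd]
    rw [heq]
    refine Lp.ext ?_
    have hz2 : (Φ.2 : ℝ → ℂ) =ᵐ[μ01] 0 := Lp.coeFn_zero ℂ 2 μ01
    filter_upwards [Lp.coeFn_sub (c • Φ.2) ((A Φ).2), Lp.coeFn_smul c Φ.2, hA2, hz2,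
      Lp.coeFn_zero ℂ 2 μ01] with x h1 h2 h3 h4 h5
    have h4' : (Φ.2 : ℝ → ℂ) x = 0 := h4
    have h5' : ((0 : Lp ℂ 2 μ01) : ℝ → ℂ) x = 0 := h5
    rw [h1, Pi.sub_apply, h2, Pi.smul_apply, smul_eq_mul, h3, hJ, h4']
    simpa using h5'.symm
  have hT1 : ((T Φ).1 : ℝ → ℂ) =ᵐ[μ01] fun x => (c - (u x : ℂ)) * φ1 x := by
    have heq : (T Φ).1 = c • Φ.1 - (A Φ).1 := by
      rw [hTapp]; simp [Prod.fst_sub, Prod.smul_fst]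
    rw [heq]
    have hz2 : (Φ.2 : ℝ → ℂ) =ᵐ[μ01] 0 := Lp.coeFn_zero ℂ 2 μ01
    filter_upwards [Lp.coeFn_sub (c • Φ.1) ((A Φ).1), Lp.coeFn_smul c Φ.1, hA1, hcoe1, hz2]
      with x h1 h2 h3 h4 h5
    have h5' : (Φ.2 : ℝ → ℂ) x = 0 := h5
    rw [h1, Pi.sub_apply, h2, Pi.smul_apply, smul_eq_mul, h3, h4, h5']
    simp only [Pi.zero_apply, mul_zero, add_zero]
    ring
  -- pointwise bound
  have hbound : ∀ᵐ x ∂μ01, ‖((T Φ).1 : ℝ → ℂ) x‖ ≤ ‖(ε • φ1) x‖ := by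
    filter_upwards [hT1, huu'] with x h1 h2
    rw [h1]
    have hnorm_smul : ‖(ε • φ1) x‖ = ε * ‖φ1 x‖ := by
      rw [Pi.smul_apply, norm_smul, Real.norm_of_nonneg hεpos.le]
    rw [hnorm_smul, norm_mul]
    by_cases hx : x ∈ S₁ ∪ S₂
    · have hxS : x ∈ S := by rcases hx with h | h; exacts [hS₁sub h, hS₂sub h]
      have hdist : dist ((u' x : ℂ)) c < ε := hxS
      have : ‖c - (u x : ℂ)‖ < ε := by
        rw [← h2] at hdist
        rwa [dist_eq_norm, norm_sub_rev] at hdist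
      exact mul_le_mul_of_nonneg_right this.le (norm_nonneg _)
    · have hx1 : x ∉ S₁ := fun h => hx (Or.inl h)
      have hx2 : x ∉ S₂ := fun h => hx (Or.inr h)
      have : φ1 x = 0 := by
        rw [hφ1def, Pi.sub_apply, Set.indicator_of_notMem hx1, Set.indicator_of_notMem hx2,
          sub_zero]
      rw [this]
      simp
  have hsm : eLpNorm ((T Φ).1 : ℝ → ℂ) 2 μ01 ≤ eLpNorm (ε • φ1) 2 μ01 :=
    eLpNorm_mono_ae hbound
  have hnorm1 : ‖(T Φ).1‖ ≤ ε * ‖Φ.1‖ := by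
    have hε2 : eLpNorm (ε • φ1) 2 μ01 = (‖ε‖₊ : ENNReal) * eLpNorm φ1 2 μ01 := by
      rw [eLpNorm_const_smul, enorm_eq_nnnorm]
    have hfin : eLpNorm φ1 2 μ01 ≠ ⊤ := hmem1.2.ne
    have h1 : ‖(T Φ).1‖ = (eLpNorm ((T Φ).1 : ℝ → ℂ) 2 μ01).toReal := Lp.norm_def _
    have h2 : ‖Φ.1‖ = (eLpNorm φ1 2 μ01).toReal := Lp.norm_toLp φ1 hmem1
    rw [h1, h2]
    calc (eLpNorm ((T Φ).1 : ℝ → ℂ) 2 μ01).toReal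
        ≤ ((‖ε‖₊ : ENNReal) * eLpNorm φ1 2 μ01).toReal := by
          refine ENNReal.toReal_mono ?_ (hsm.trans_eq hε2)
          exact ENNReal.mul_ne_top ENNReal.coe_ne_top hfin
      _ = ε * (eLpNorm φ1 2 μ01).toReal := by
          rw [ENNReal.toReal_mul, ENNReal.coe_toReal, coe_nnnorm,
            Real.norm_of_nonneg hεpos.le]
  have hΦ1ne : Φ.1 ≠ 0 := by
    intro h
    have hz : φ1 =ᵐ[μ01] 0 := (hcoe1.symm.trans (h ▸ Lp.coeFn_zero ℂ 2 μ01 : (Φ.1 : ℝ → ℂ) =ᵐ[μ01] 0))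
    rw [Filter.EventuallyEq, ae_iff] at hz
    have hsub : S₁ ⊆ {x | ¬ φ1 x = (0 : ℝ → ℂ) x} := by
      intro x hx
      have hx2 : x ∉ S₂ := Set.disjoint_left.mp hdisj hx
      have : φ1 x = (a₂ : ℂ) := by
        rw [hφ1def, Pi.sub_apply, Set.indicator_of_mem hx, Set.indicator_of_notMem hx2,
          sub_zero]
      simp only [Set.mem_setOf_eq, this, Pi.zero_apply]
      exact Complex.ofReal_ne_zero.mpr ha₂.ne'
    have hmm : μ01 S₁ ≤ μ01 {x | ¬ φ1 x = (0 : ℝ → ℂ) x} := measure_mono hsub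
    rw [hz] at hmm
    exact absurd (le_antisymm hmm zero_le) hpos₁.ne'
  have hΦpos : 0 < ‖Φ.1‖ := norm_pos_iff.mpr hΦ1ne
  have hnormΦ : ‖Φ‖ = ‖Φ.1‖ := by
    rw [Prod.norm_def]
    simp only [hΦdef, norm_zero]
    exact max_eq_left (norm_nonneg _)
  have hnormTΦ : ‖T Φ‖ = ‖(T Φ).1‖ := by
    have : T Φ = ((T Φ).1, (T Φ).2) := rfl
    rw [Prod.norm_def, hT2, norm_zero]
    exact max_eq_left (norm_nonneg _)
  have hchain : ‖Φ.1‖ ≤ ‖B‖ * (ε * ‖Φ.1‖) := by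
    calc ‖Φ.1‖ = ‖Φ‖ := hnormΦ.symm
      _ = ‖B (T Φ)‖ := by rw [hB Φ]
      _ ≤ ‖B‖ * ‖T Φ‖ := B.le_opNorm _
      _ = ‖B‖ * ‖(T Φ).1‖ := by rw [hnormTΦ]
      _ ≤ ‖B‖ * (ε * ‖Φ.1‖) := by
          exact mul_le_mul_of_nonneg_left hnorm1 (norm_nonneg _)
  have : ‖B‖ * (ε * ‖Φ.1‖) < ‖Φ.1‖ := by
    calc ‖B‖ * (ε * ‖Φ.1‖) = (‖B‖ * ε) * ‖Φ.1‖ := by ring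
      _ < 1 * ‖Φ.1‖ := mul_lt_mul_of_pos_right hBε hΦpos
      _ = ‖Φ.1‖ := one_mul _
  linarith

end Stmt4

/-- The spectrum of the operator `A₀` on `L²(I;ℂ)²` is the union of the
essential range of `ũ` and the set of `c` outside the essential range satisfying
`∫₀¹ gH/(c-ũ)² dλ = 1`. The operator `A₀(φ₁,φ₂) = (ũφ₁ + Hφ₂, g(∫φ₁) + ũφ₂)` is specified
through its almost-everywhere defining property. -/
theorem stmt4 (g : ℝ) (hg : 0 < g) (u H : ℝ → ℝ)
    (hu : MemLp u ⊤ μ01) (hH : MemLp H ⊤ μ01)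
    (hHpos : 0 < essInf H μ01)
    (A : (Lp ℂ 2 μ01 × Lp ℂ 2 μ01) →L[ℂ] (Lp ℂ 2 μ01 × Lp ℂ 2 μ01))
    (hA : ∀ φ : Lp ℂ 2 μ01 × Lp ℂ 2 μ01,
      ((A φ).1 : ℝ → ℂ) =ᵐ[μ01]
        (fun x => (u x : ℂ) * (φ.1 : ℝ → ℂ) x + (H x : ℂ) * (φ.2 : ℝ → ℂ) x) ∧
      ((A φ).2 : ℝ → ℂ) =ᵐ[μ01]
        (fun x => (g : ℂ) * (∫ y, (φ.1 : ℝ → ℂ) y ∂μ01) + (u x : ℂ) * (φ.2 : ℝ → ℂ) x)) :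
    spectrum ℂ A =
      {c : ℂ | ∀ ε : ℝ, 0 < ε → 0 < μ01 {x | dist ((u x : ℂ)) c < ε}} ∪
      {c : ℂ | (¬ ∀ ε : ℝ, 0 < ε → 0 < μ01 {x | dist ((u x : ℂ)) c < ε}) ∧
        ∫ x, (g : ℂ) * (H x : ℂ) / (c - (u x : ℂ)) ^ 2 ∂μ01 = 1} := by
  ext c
  simp only [Set.mem_union, Set.mem_setOf_eq]
  constructor
  · intro hspec
    by_cases hc : ∀ ε : ℝ, 0 < ε → 0 < μ01 {x | dist ((u x : ℂ)) c < ε}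
    · exact Or.inl hc
    · right
      refine ⟨hc, ?_⟩
      by_contra hF
      obtain ⟨ε, hε, hae⟩ := Stmt4.not_essrange hc
      exact Stmt4.not_mem_spectrum hu hH A hA hε hae hF hspec
  · rintro (hc | ⟨hc, hF⟩)
    · exact Stmt4.mem_spectrum_of_essrange hu hH A hA hc
    · obtain ⟨ε, hε, hae⟩ := Stmt4.not_essrange hc
      exact Stmt4.mem_spectrum_of_eq_one hg hu hH A hA hε hae hF
end

section
/- Let I = (0,1) with Lebesgue measure μ, g > 0, and ũ, H ∈ L^∞(I;ℝ) with essinf_I H > 0. A complex number c is an eigenvalue of A₀ (i.e. there exists a nonzero φ ∈ L²(I;ℂ)² with A₀φ = cφ) if and only if either [(c − ũ)⁻¹ ∈ L⁴(I) and ∫₀¹ g H(λ)/(c − ũ(λ))² dλ = 1] or [μ{λ ∈ I : ũ(λ) = c} > 0]. -/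
open MeasureTheory
open scoped ENNReal

instance inst_s5 : IsFiniteMeasure μ01 := ⟨by simp [μ01, Real.volume_Ioo]⟩

instance : NullSingletonClass μ01 := by unfold μ01; infer_instance

/-- A complex number `c` is an eigenvalue of `A₀` iff either
`(c-ũ)⁻¹ ∈ L⁴(I)` and `∫₀¹ gH/(c-ũ)² dλ = 1`, or `μ{ũ = c} > 0`. -/
theorem stmt5 (g : ℝ) (hg : 0 < g) (u H : ℝ → ℝ)
    (hu : MemLp u ⊤ μ01) (hH : MemLp H ⊤ μ01)
    (hHpos : 0 < essInf H μ01)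
    (A : (Lp ℂ 2 μ01 × Lp ℂ 2 μ01) →L[ℂ] (Lp ℂ 2 μ01 × Lp ℂ 2 μ01))
    (hA : ∀ φ : Lp ℂ 2 μ01 × Lp ℂ 2 μ01,
      ((A φ).1 : ℝ → ℂ) =ᵐ[μ01]
        (fun x => (u x : ℂ) * (φ.1 : ℝ → ℂ) x + (H x : ℂ) * (φ.2 : ℝ → ℂ) x) ∧
      ((A φ).2 : ℝ → ℂ) =ᵐ[μ01]
        (fun x => (g : ℂ) * (∫ y, (φ.1 : ℝ → ℂ) y ∂μ01) + (u x : ℂ) * (φ.2 : ℝ → ℂ) x))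
    (c : ℂ) :
    (∃ φ : Lp ℂ 2 μ01 × Lp ℂ 2 μ01, φ ≠ 0 ∧ A φ = c • φ) ↔
      ((MemLp (fun x => (c - (u x : ℂ))⁻¹) 4 μ01 ∧
          ∫ x, (g : ℂ) * (H x : ℂ) / (c - (u x : ℂ)) ^ 2 ∂μ01 = 1) ∨
        0 < μ01 {x | (u x : ℂ) = c}) := by
  classical
  -- measurable representatives
  obtain ⟨u', hu'm, huu'⟩ : ∃ u' : ℝ → ℝ, Measurable u' ∧ u =ᵐ[μ01] u' :=
    ⟨hu.1.mk u, hu.1.stronglyMeasurable_mk.measurable, hu.1.ae_eq_mk⟩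
  obtain ⟨H', hH'm, hHH'⟩ : ∃ H' : ℝ → ℝ, Measurable H' ∧ H =ᵐ[μ01] H' :=
    ⟨hH.1.mk H, hH.1.stronglyMeasurable_mk.measurable, hH.1.ae_eq_mk⟩
  -- upper bound for H
  obtain ⟨CH, hCH⟩ : ∃ C : ℝ, ∀ᵐ x ∂μ01, ‖H x‖ ≤ C := by
    refine ⟨(eLpNormEssSup H μ01).toReal, ?_⟩
    have h := ae_le_eLpNormEssSup (f := H) (μ := μ01)
    have hfin : eLpNormEssSup H μ01 ≠ ⊤ := by
      have := hH.2; rwa [eLpNorm_exponent_top, lt_top_iff_ne_top] at this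
    filter_upwards [h] with x hx
    calc ‖H x‖ = ((‖H x‖₊ : ℝ≥0∞)).toReal := by simp
    _ ≤ (eLpNormEssSup H μ01).toReal := ENNReal.toReal_mono hfin hx
  -- a.e. lower bound for H
  set δ : ℝ := essInf H μ01 / 2 with hδdef
  have hδpos : 0 < δ := half_pos hHpos
  have hδ : ∀ᵐ x ∂μ01, δ < H x := by
    refine ae_lt_of_lt_essInf (by simpa [hδdef] using half_lt_self hHpos) ?_
    refine ⟨-CH, ?_⟩
    rw [Filter.eventually_map]
    filter_upwards [hCH] with x hx
    simp only [Real.norm_eq_abs, abs_le] at hx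
    simpa using hx.1
  -- AE strong measurability of `(c - u)⁻¹`
  have hwm : AEStronglyMeasurable (fun x => (c - (u x : ℂ))⁻¹) μ01 := by
    have hm : Measurable (fun x => (c - (u' x : ℂ))⁻¹) :=
      (measurable_const.sub (Complex.measurable_ofReal.comp hu'm)).inv
    refine hm.aestronglyMeasurable.congr ?_
    filter_upwards [huu'] with x hx
    simp [hx]
  -- key reformulation of the eigenvalue equation
  have key : ∀ φ : Lp ℂ 2 μ01 × Lp ℂ 2 μ01, A φ = c • φ ↔
      ((fun x => (u x : ℂ) * (φ.1 : ℝ → ℂ) x + (H x : ℂ) * (φ.2 : ℝ → ℂ) x)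
          =ᵐ[μ01] fun x => c * (φ.1 : ℝ → ℂ) x) ∧
      ((fun x => (g : ℂ) * (∫ y, (φ.1 : ℝ → ℂ) y ∂μ01) + (u x : ℂ) * (φ.2 : ℝ → ℂ) x)
          =ᵐ[μ01] fun x => c * (φ.2 : ℝ → ℂ) x) := by
    intro φ
    have hs1 : ⇑(c • φ.1) =ᵐ[μ01] fun x => c * (φ.1 : ℝ → ℂ) x :=
      (Lp.coeFn_smul c φ.1).trans (Filter.Eventually.of_forall fun x => by simp)
    have hs2 : ⇑(c • φ.2) =ᵐ[μ01] fun x => c * (φ.2 : ℝ → ℂ) x :=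
      (Lp.coeFn_smul c φ.2).trans (Filter.Eventually.of_forall fun x => by simp)
    constructor
    · intro h
      have h1 : (A φ).1 = c • φ.1 := by rw [h]; rfl
      have h2 : (A φ).2 = c • φ.2 := by rw [h]; rfl
      constructor
      · refine (hA φ).1.symm.trans ?_
        rw [h1]; exact hs1
      · refine (hA φ).2.symm.trans ?_
        rw [h2]; exact hs2
    · rintro ⟨e1, e2⟩
      have h1 : (A φ).1 = c • φ.1 := Lp.ext ((hA φ).1.trans (e1.trans hs1.symm))
      have h2 : (A φ).2 = c • φ.2 := Lp.ext ((hA φ).2.trans (e2.trans hs2.symm))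
      exact Prod.ext h1 h2
  -- the construction in the atom case
  have atomCase : 0 < μ01 {x | (u x : ℂ) = c} →
      ∃ φ : Lp ℂ 2 μ01 × Lp ℂ 2 μ01, φ ≠ 0 ∧ A φ = c • φ := by
    intro hS
    set S : Set ℝ := {x | (u' x : ℂ) = c} ∩ Set.Ioo 0 1 with hSdef
    have hSm : MeasurableSet S := by
      refine MeasurableSet.inter ?_ measurableSet_Ioo
      exact (Complex.measurable_ofReal.comp hu'm) (measurableSet_singleton c)
    have hSS : 0 < μ01 S := by
      have h1 : ({x | (u x : ℂ) = c} : Set ℝ) =ᵐ[μ01] S := by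
        filter_upwards [huu', ae_restrict_mem (μ := volume) measurableSet_Ioo] with x hx hx2
        refine eq_iff_iff.2 ?_
        show (u x : ℂ) = c ↔ (u' x : ℂ) = c ∧ x ∈ Set.Ioo (0:ℝ) 1
        rw [hx]
        exact ⟨fun h => ⟨h, hx2⟩, fun h => h.1⟩
      rwa [measure_congr h1] at hS
    set J : ℂ := ∫ x, S.indicator (fun y => (y : ℂ)) x ∂μ01 with hJdef
    have hindM : MemLp (S.indicator (fun y => (y : ℂ))) 2 μ01 := by
      refine MemLp.of_bound (((Complex.measurable_ofReal).indicator hSm).aestronglyMeasurable) 1 ?_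
      refine Filter.Eventually.of_forall fun x => ?_
      by_cases hx : x ∈ S
      · have hx2 : x ∈ Set.Ioo (0:ℝ) 1 := hx.2
        rw [Set.indicator_of_mem hx]
        simp only [Complex.norm_real, Real.norm_eq_abs]
        rw [abs_of_pos hx2.1]
        exact hx2.2.le
      · rw [Set.indicator_of_notMem hx]; simp
    set m : ℂ := J / ((μ01 S).toReal : ℂ) with hmdef
    set f1 : ℝ → ℂ := S.indicator (fun y => (y : ℂ) - m) with hf1def
    have hf1M : MemLp f1 2 μ01 := by
      refine MemLp.of_bound ?_ (1 + ‖m‖) ?_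
      · exact ((Complex.measurable_ofReal.sub measurable_const).indicator hSm).aestronglyMeasurable
      · refine Filter.Eventually.of_forall fun x => ?_
        simp only [hf1def]
        by_cases hx : x ∈ S
        · have hx2 : x ∈ Set.Ioo (0:ℝ) 1 := hx.2
          rw [Set.indicator_of_mem hx]
          refine (norm_sub_le _ _).trans ?_
          have : ‖((x:ℝ) : ℂ)‖ ≤ 1 := by
            simp only [Complex.norm_real, Real.norm_eq_abs]
            rw [abs_of_pos hx2.1]; exact hx2.2.le
          linarith
        · rw [Set.indicator_of_notMem hx, norm_zero]; positivity
    have hμS : ((μ01 S).toReal : ℝ) ≠ 0 :=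
      ENNReal.toReal_ne_zero.2 ⟨hSS.ne', (measure_lt_top μ01 S).ne⟩
    have hsplit : f1 = fun x => S.indicator (fun y => (y : ℂ)) x - S.indicator (fun _ => m) x := by
      funext x
      show S.indicator (fun y => (y : ℂ) - m) x = _
      by_cases hx : x ∈ S
      · rw [Set.indicator_of_mem hx, Set.indicator_of_mem hx, Set.indicator_of_mem hx]
      · rw [Set.indicator_of_notMem hx, Set.indicator_of_notMem hx,
          Set.indicator_of_notMem hx, sub_zero]
    have hint_f1 : ∫ x, f1 x ∂μ01 = 0 := by
      rw [hsplit, integral_sub (hindM.integrable (by norm_num))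
        ((integrable_const m).indicator hSm), integral_indicator_const m hSm, ← hJdef]
      have hne : ((μ01 S).toReal : ℂ) ≠ 0 := Complex.ofReal_ne_zero.2 hμS
      rw [hmdef, Complex.real_smul]
      field_simp
      simp [measureReal_def]
    refine ⟨(hf1M.toLp f1, 0), ?_, ?_⟩
    · intro h0
      have h1 : hf1M.toLp f1 = 0 := congrArg Prod.fst h0
      have hae : f1 =ᵐ[μ01] 0 := by
        refine (MemLp.coeFn_toLp hf1M).symm.trans ?_
        rw [h1]
        exact Lp.coeFn_zero ℂ 2 μ01
      have hN : μ01 {x | f1 x ≠ 0} = 0 := by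
        have := (Filter.eventuallyEq_iff_exists_mem.1 hae)
        rw [Filter.EventuallyEq, ae_iff] at hae
        simpa using hae
      have hsub : S ⊆ {x | f1 x ≠ 0} ∪ {m.re} := by
        intro x hx
        by_cases hfx : f1 x = 0
        · right
          have : ((x:ℝ) : ℂ) - m = 0 := by
            have := hfx
            rwa [hf1def, Set.indicator_of_mem hx] at this
          have hxm : ((x:ℝ) : ℂ) = m := sub_eq_zero.1 this
          have : (x : ℝ) = m.re := by
            rw [← hxm]; simp
          simpa using this
        · left; exact hfx
      have : μ01 S ≤ 0 := by
        calc μ01 S ≤ μ01 ({x | f1 x ≠ 0} ∪ {m.re}) := measure_mono hsub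
        _ ≤ μ01 {x | f1 x ≠ 0} + μ01 {m.re} := measure_union_le _ _
        _ = 0 := by rw [hN, measure_singleton]; simp
      exact absurd (lt_of_lt_of_le hSS this) (by simp)
    · refine (key _).2 ⟨?_, ?_⟩
      · filter_upwards [MemLp.coeFn_toLp hf1M, Lp.coeFn_zero ℂ 2 μ01, huu'] with x h1 h2 hx
        rw [h1]
        have h2' : ((0 : Lp ℂ 2 μ01) : ℝ → ℂ) x = 0 := h2
        rw [h2', mul_zero, add_zero]
        by_cases hxS : x ∈ S
        · have huc : (u x : ℂ) = c := by rw [hx]; exact hxS.1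
          rw [huc]
        · rw [hf1def, Set.indicator_of_notMem hxS, mul_zero, mul_zero]
      · have hM : (∫ y, ((hf1M.toLp f1 : Lp ℂ 2 μ01) : ℝ → ℂ) y ∂μ01) = 0 := by
          rw [integral_congr_ae (MemLp.coeFn_toLp hf1M)]; exact hint_f1
        filter_upwards [Lp.coeFn_zero ℂ 2 μ01] with x h2
        have h2' : ((0 : Lp ℂ 2 μ01) : ℝ → ℂ) x = 0 := h2
        rw [h2', hM, mul_zero, mul_zero, mul_zero, add_zero]
  constructor
  · rintro ⟨φ, hφ0, hφ⟩
    by_cases hS : 0 < μ01 {x | (u x : ℂ) = c}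
    · exact Or.inr hS
    · left
      have hS0 : μ01 {x | (u x : ℂ) = c} = 0 := by
        rwa [pos_iff_ne_zero, not_not] at hS
      have hSc : ∀ᵐ x ∂μ01, (u x : ℂ) ≠ c := by
        rw [ae_iff]; simpa using hS0
      obtain ⟨e1, e2⟩ := (key φ).1 hφ
      set f₁ : ℝ → ℂ := ⇑φ.1 with hf₁def
      set f₂ : ℝ → ℂ := ⇑φ.2 with hf₂def
      set M : ℂ := ∫ y, f₁ y ∂μ01 with hMdef
      have hf₂ : ∀ᵐ x ∂μ01, f₂ x = (g : ℂ) * M / (c - (u x : ℂ)) := by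
        filter_upwards [e2, hSc] with x hx hne
        have hsub : (c : ℂ) - (u x : ℂ) ≠ 0 := sub_ne_zero.2 (Ne.symm hne)
        rw [eq_div_iff hsub]
        have hx' : (g : ℂ) * M + (u x : ℂ) * f₂ x = c * f₂ x := hx
        linear_combination -hx'
      have hf₁ : ∀ᵐ x ∂μ01, f₁ x = (g : ℂ) * M * (H x : ℂ) / (c - (u x : ℂ)) ^ 2 := by
        filter_upwards [e1, hf₂, hSc] with x hx h2 hne
        have hsub : (c : ℂ) - (u x : ℂ) ≠ 0 := sub_ne_zero.2 (Ne.symm hne)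
        have hx' : (u x : ℂ) * f₁ x + (H x : ℂ) * f₂ x = c * f₁ x := hx
        have h3 : (c - (u x : ℂ)) * f₁ x = (H x : ℂ) * f₂ x := by linear_combination -hx'
        have h2' : f₂ x * (c - (u x : ℂ)) = (g : ℂ) * M := by
          rw [h2]; field_simp
        rw [eq_div_iff (pow_ne_zero 2 hsub)]
        linear_combination (c - (u x : ℂ)) * h3 + (H x : ℂ) * h2'
      by_cases hM0 : M = 0
      · exfalso
        have hz2 : f₂ =ᵐ[μ01] 0 := by
          filter_upwards [hf₂] with x hx
          simp [hx, hM0]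
        have hz1 : f₁ =ᵐ[μ01] 0 := by
          filter_upwards [hf₁] with x hx
          simp [hx, hM0]
        have hp1 : φ.1 = 0 := Lp.ext (hz1.trans (Lp.coeFn_zero ℂ 2 μ01).symm)
        have hp2 : φ.2 = 0 := Lp.ext (hz2.trans (Lp.coeFn_zero ℂ 2 μ01).symm)
        exact hφ0 (Prod.ext hp1 hp2)
      have hk0 : (g : ℂ) * M ≠ 0 := by
        refine mul_ne_zero ?_ hM0
        exact_mod_cast (Complex.ofReal_ne_zero.2 hg.ne')
      -- square of the inverse is in L²
      have hq2 : MemLp (fun x => f₁ x * (((g : ℂ) * M * (H x : ℂ)))⁻¹) 2 μ01 := by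
        refine MemLp.of_le_mul (c := (g * ‖M‖ * δ)⁻¹) (Lp.memLp φ.1) ?_ ?_
        · refine AEStronglyMeasurable.mul (Lp.aestronglyMeasurable φ.1) ?_
          have hm : Measurable (fun x => (((g : ℂ) * M * (H' x : ℂ)))⁻¹) :=
            ((measurable_const.mul (Complex.measurable_ofReal.comp hH'm))).inv
          refine hm.aestronglyMeasurable.congr ?_
          filter_upwards [hHH'] with x hx
          simp [hx]
        · filter_upwards [hδ] with x hx
          rw [norm_mul, norm_inv, mul_comm]
          have hMpos : 0 < ‖M‖ := norm_pos_iff.2 hM0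
          have h1 : g * ‖M‖ * δ ≤ ‖(g : ℂ) * M * (H x : ℂ)‖ := by
            rw [norm_mul, norm_mul, Complex.norm_real, Complex.norm_real, Real.norm_eq_abs,
              Real.norm_eq_abs, abs_of_pos hg]
            have hd : δ ≤ |H x| := le_trans hx.le (le_abs_self _)
            gcongr
          have hpos : (0:ℝ) < g * ‖M‖ * δ := by positivity
          have hinv : ‖(g : ℂ) * M * (H x : ℂ)‖⁻¹ ≤ (g * ‖M‖ * δ)⁻¹ := by
            gcongr
          exact mul_le_mul_of_nonneg_right hinv (norm_nonneg _)
      have hqq : MemLp (fun x => (c - (u x : ℂ))⁻¹ * (c - (u x : ℂ))⁻¹) 2 μ01 := by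
        refine hq2.ae_eq ?_
        filter_upwards [hf₁, hδ, hSc] with x h1 hxδ hne
        have hsub : (c : ℂ) - (u x : ℂ) ≠ 0 := sub_ne_zero.2 (Ne.symm hne)
        have hHx : (H x : ℂ) ≠ 0 :=
          Complex.ofReal_ne_zero.2 (lt_trans hδpos hxδ).ne'
        have hg0 : (g : ℂ) ≠ 0 := Complex.ofReal_ne_zero.2 hg.ne'
        rw [h1]
        field_simp
      have h4 : MemLp (fun x => (c - (u x : ℂ))⁻¹) 4 μ01 := by
        have h42 : (4 : ℝ≥0∞) / 2 = 2 := by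
          rw [eq_comm, ENNReal.eq_div_iff (by norm_num) (by norm_num)]; norm_num
        have hiff := memLp_norm_rpow_iff (p := 4) (q := 2) hwm (by norm_num) (by norm_num)
        rw [h42] at hiff
        refine hiff.1 ?_
        have heq : (fun x => ‖(c - (u x : ℂ))⁻¹‖ ^ ((2 : ℝ≥0∞)).toReal)
            = fun x => ‖(c - (u x : ℂ))⁻¹ * (c - (u x : ℂ))⁻¹‖ := by
          funext x
          rw [norm_mul, show ((2 : ℝ≥0∞)).toReal = ((2:ℕ):ℝ) by simp,
            Real.rpow_natCast, pow_two]
        rw [heq]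
        exact hqq.norm
      refine ⟨h4, ?_⟩
      have hintc : (fun x => (g : ℂ) * (H x : ℂ) / (c - (u x : ℂ)) ^ 2) =ᵐ[μ01]
          fun x => f₁ x / M := by
        filter_upwards [hf₁] with x h1
        rw [h1, div_div]
        rw [show (g : ℂ) * M * (H x : ℂ) = ((g : ℂ) * (H x : ℂ)) * M by ring,
          show (c - (u x : ℂ)) ^ 2 * M = (c - (u x : ℂ)) ^ 2 * M from rfl]
        rw [mul_div_assoc, mul_comm ((c - (u x : ℂ)) ^ 2) M, ← div_div,
          mul_div_assoc, div_self hM0, mul_one, mul_div_assoc]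
      rw [integral_congr_ae hintc, integral_div]
      rw [← hMdef, div_self hM0]
  · rintro (⟨hL4, hInt⟩ | hS)
    · by_cases hSpos : 0 < μ01 {x | (u x : ℂ) = c}
      · exact atomCase hSpos
      have hS0 : μ01 {x | (u x : ℂ) = c} = 0 := by
        rwa [pos_iff_ne_zero, not_not] at hSpos
      have hSc : ∀ᵐ x ∂μ01, (u x : ℂ) ≠ c := by rw [ae_iff]; simpa using hS0
      set φ1 : ℝ → ℂ := fun x => (g : ℂ) * (H x : ℂ) / (c - (u x : ℂ)) ^ 2 with hφ1def
      set φ2 : ℝ → ℂ := fun x => (g : ℂ) * (c - (u x : ℂ))⁻¹ with hφ2def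
      have hsq : MemLp (fun x => (c - (u x : ℂ))⁻¹ * (c - (u x : ℂ))⁻¹) 2 μ01 := by
        have harith : (1 : ℝ≥0∞) / 2 = 1 / 4 + 1 / 4 := by
          rw [ENNReal.div_add_div_same, eq_comm,
            ENNReal.div_eq_div_iff (by norm_num) (by norm_num) (by norm_num) (by norm_num)]
          norm_num
        have : ENNReal.HolderTriple 4 4 2 := ⟨by simp only [← one_div]; exact harith.symm⟩
        have h := MemLp.smul (E := ℂ) (𝕜 := ℂ) (p := 4) (q := 4) (r := 2) hL4 hL4
        exact h.ae_eq (Filter.Eventually.of_forall fun x => rfl)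
      have h1M : MemLp φ1 2 μ01 := by
        refine MemLp.of_le_mul (c := g * (|CH| + 1)) hsq ?_ ?_
        · have hm : Measurable (fun x => (g : ℂ) * (H' x : ℂ) / (c - (u' x : ℂ)) ^ 2) := by
            refine Measurable.div (measurable_const.mul (Complex.measurable_ofReal.comp hH'm)) ?_
            exact (measurable_const.sub (Complex.measurable_ofReal.comp hu'm)).pow measurable_const
          refine hm.aestronglyMeasurable.congr ?_
          filter_upwards [huu', hHH'] with x hx hy
          simp only [hφ1def, hx, hy]
        · filter_upwards [hCH] with x hx
          have hsplit : φ1 x = ((g : ℂ) * (H x : ℂ)) * ((c - (u x : ℂ))⁻¹ * (c - (u x : ℂ))⁻¹) := by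
            simp only [hφ1def]
            rw [div_eq_mul_inv, sq, mul_inv]
          rw [hsplit, norm_mul]
          refine mul_le_mul_of_nonneg_right ?_ (norm_nonneg _)
          rw [norm_mul, Complex.norm_real, Complex.norm_real, Real.norm_eq_abs, Real.norm_eq_abs,
            abs_of_pos hg]
          have h1 : |H x| ≤ |CH| + 1 := by
            rw [Real.norm_eq_abs] at hx
            have := le_abs_self CH; linarith
          exact mul_le_mul_of_nonneg_left h1 hg.le
      have h2M : MemLp φ2 2 μ01 := by
        have hL2 : MemLp (fun x => (c - (u x : ℂ))⁻¹) 2 μ01 :=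
          hL4.mono_exponent (by norm_num)
        refine MemLp.of_le_mul (c := g) hL2 (aestronglyMeasurable_const.mul hL4.1) ?_
        refine Filter.Eventually.of_forall fun x => ?_
        simp only [hφ2def]
        rw [norm_mul, Complex.norm_real, Real.norm_eq_abs, abs_of_pos hg]
      have hM1eq : (∫ y, ((h1M.toLp φ1 : Lp ℂ 2 μ01) : ℝ → ℂ) y ∂μ01) = 1 := by
        rw [integral_congr_ae (MemLp.coeFn_toLp h1M)]
        exact hInt
      refine ⟨(h1M.toLp φ1, h2M.toLp φ2), ?_, ?_⟩
      · intro h0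
        have h1 : h1M.toLp φ1 = 0 := congrArg Prod.fst h0
        have hae : φ1 =ᵐ[μ01] 0 :=
          (MemLp.coeFn_toLp h1M).symm.trans (by rw [h1]; exact Lp.coeFn_zero ℂ 2 μ01)
        have hz : ∫ x, φ1 x ∂μ01 = 0 := by
          rw [integral_congr_ae hae]; simp
        rw [hz] at hInt
        exact one_ne_zero hInt.symm
      · refine (key _).2 ⟨?_, ?_⟩
        · filter_upwards [MemLp.coeFn_toLp h1M, MemLp.coeFn_toLp h2M, hSc] with x e1 e2 hne
          show (u x : ℂ) * ((h1M.toLp φ1 : Lp ℂ 2 μ01) : ℝ → ℂ) x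
              + (H x : ℂ) * ((h2M.toLp φ2 : Lp ℂ 2 μ01) : ℝ → ℂ) x
              = c * ((h1M.toLp φ1 : Lp ℂ 2 μ01) : ℝ → ℂ) x
          rw [e1, e2]
          have hsub : (c : ℂ) - (u x : ℂ) ≠ 0 := sub_ne_zero.2 (Ne.symm hne)
          simp only [hφ1def, hφ2def]
          field_simp
          ring
        · filter_upwards [MemLp.coeFn_toLp h2M, hSc] with x e2 hne
          show (g : ℂ) * (∫ y, ((h1M.toLp φ1 : Lp ℂ 2 μ01) : ℝ → ℂ) y ∂μ01)
              + (u x : ℂ) * ((h2M.toLp φ2 : Lp ℂ 2 μ01) : ℝ → ℂ) x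
              = c * ((h2M.toLp φ2 : Lp ℂ 2 μ01) : ℝ → ℂ) x
          rw [hM1eq, e2]
          have hsub : (c : ℂ) - (u x : ℂ) ≠ 0 := sub_ne_zero.2 (Ne.symm hne)
          simp only [hφ2def]
          field_simp
          ring
    · exact atomCase hS
end

section
/- Let I = (0,1) with Lebesgue measure μ, g > 0, and ũ, H ∈ L^∞(I;ℝ) with essinf_I H > 0. Set ũ₋ = essinf_I ũ, ũ₊ = esssup_I ũ and h = ∫₀¹ H dλ. Then σ(A₀) ⊆ J₋ ∪ J₊ ∪ R, where J₋ = [ũ₋ − √(gh), ũ₋), J₊ = (ũ₊, ũ₊ + √(gh)] (viewed as subsets of ℝ ⊂ ℂ), and R = { z ∈ ℂ : ũ₋ ≤ Re z ≤ ũ₊, |Im z| ≤ √(gh), and |z − (ũ₋ + ũ₊)/2| ≤ (ũ₊ − ũ₋)/2 }. -/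
open MeasureTheory

set_option maxHeartbeats 1000000

instance : IsProbabilityMeasure μ01 :=
  ⟨by simp [μ01, Real.volume_Ioo]⟩

lemma ae_abs_le_of_memtop {f : ℝ → ℝ} (hf : MemLp f ⊤ μ01) :
    ∃ C : ℝ, 0 ≤ C ∧ ∀ᵐ x ∂μ01, |f x| ≤ C := by
  refine ⟨(eLpNormEssSup f μ01).toReal, ENNReal.toReal_nonneg, ?_⟩
  have hlt : eLpNormEssSup f μ01 < ⊤ := by
    have h2 := hf.2
    rwa [eLpNorm_exponent_top] at h2
  filter_upwards [ae_le_eLpNormEssSup (f := f) (μ := μ01)] with x hx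
  have := ENNReal.toReal_mono hlt.ne hx
  simpa [Real.norm_eq_abs] using this

lemma integrable_of_aebdd {E : Type*} [NormedAddCommGroup E] {v : ℝ → E}
    (hm : AEStronglyMeasurable v μ01) {C : ℝ} (hv : ∀ᵐ x ∂μ01, ‖v x‖ ≤ C) :
    Integrable v μ01 :=
  Integrable.mono' (integrable_const C) hm hv

lemma memℒp2_of_bdd_mul {w f : ℝ → ℂ} (hf : MemLp f 2 μ01)
    (hw : AEStronglyMeasurable w μ01) {C : ℝ} (hC : ∀ᵐ x ∂μ01, ‖w x‖ ≤ C) :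
    MemLp (fun x => w x * f x) 2 μ01 := by
  refine MemLp.of_le (hf.const_mul (C : ℂ)) (hw.mul hf.aestronglyMeasurable) ?_
  filter_upwards [hC] with x hx
  rw [norm_mul, norm_mul]
  have h0 : (0:ℝ) ≤ C := le_trans (norm_nonneg _) hx
  have : ‖(C:ℂ)‖ = C := by simp [Complex.norm_real, abs_of_nonneg h0]
  rw [this]
  exact mul_le_mul_of_nonneg_right hx (norm_nonneg _)


lemma hpt_aux (Hv a b : ℝ) (hb : b ≠ 0) :
    (Hv:ℂ)/((a:ℂ) - (b:ℂ)*Complex.I)^2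
      = ((Hv*(a^2-b^2)/((a^2+b^2))^2 : ℝ) : ℂ)
        + ((Hv*(2*a*b)/((a^2+b^2))^2 : ℝ) : ℂ)*Complex.I := by
  have hq : (a^2+b^2) ≠ 0 := by positivity
  have hw : ((a:ℂ) - (b:ℂ)*Complex.I) ≠ 0 := by
    intro h
    apply hb
    have := congrArg Complex.im h
    simpa [neg_eq_zero] using this
  have hqc : ((a:ℂ)^2 + (b:ℂ)^2) ≠ 0 := by
    have : ((a^2+b^2 : ℝ) : ℂ) ≠ 0 := Complex.ofReal_ne_zero.mpr hq
    push_cast at this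
    exact this
  push_cast
  rw [div_eq_iff (pow_ne_zero 2 hw)]
  field_simp
  ring_nf
  simp only [show (Complex.I)^3 = -Complex.I from by
    rw [pow_succ, Complex.I_sq]; ring, Complex.I_sq]
  ring



lemma gtau_ne_one_far (g : ℝ) (hg : 0 < g) (u H : ℝ → ℝ)
    (hmu : AEStronglyMeasurable u μ01) (hmH : AEStronglyMeasurable H μ01)
    (hHint : Integrable H μ01)
    (hH0 : ∀ᵐ x ∂μ01, 0 ≤ H x)
    {CH : ℝ} (hCH0 : 0 ≤ CH) (hCHb : ∀ᵐ x ∂μ01, |H x| ≤ CH)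
    (z : ℂ) (d : ℝ) (hd : 0 < d)
    (hdb : ∀ᵐ x ∂μ01, d ≤ ‖(u x : ℂ) - z‖)
    (hfar : g * (∫ x, H x ∂μ01) < d^2) :
    (g:ℂ) * (∫ x, (H x : ℂ) / ((u x : ℂ) - z)^2 ∂μ01) ≠ 1 := by
  intro heq
  have hmuc : AEMeasurable (fun t => ((u t : ℝ) : ℂ)) μ01 :=
    Complex.measurable_ofReal.comp_aemeasurable hmu.aemeasurable
  have hmHc : AEMeasurable (fun t => ((H t : ℝ) : ℂ)) μ01 :=
    Complex.measurable_ofReal.comp_aemeasurable hmH.aemeasurable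
  have hint : Integrable (fun t => (H t : ℂ) / ((u t : ℂ) - z)^2) μ01 := by
    refine integrable_of_aebdd (C := CH / d^2) ?_ ?_
    · exact (hmHc.div ((hmuc.sub aemeasurable_const).pow_const 2)).aestronglyMeasurable
    · filter_upwards [hCHb, hdb] with t h1 h2
      rw [norm_div, norm_pow]
      have e1 : ‖((H t : ℝ):ℂ)‖ = |H t| := by simp [Complex.norm_real]
      rw [e1]
      have h3 : d^2 ≤ ‖(u t : ℂ) - z‖^2 := by
        have : d ≤ ‖(u t : ℂ) - z‖ := by assumption
        nlinarith [hd.le, norm_nonneg ((u t : ℂ) - z)]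
      exact div_le_div₀ hCH0 h1 (by positivity) h3
  have hnorm : ‖∫ x, (H x : ℂ) / ((u x : ℂ) - z)^2 ∂μ01‖
      ≤ ∫ x, H x / d^2 ∂μ01 := by
    refine le_trans (norm_integral_le_integral_norm _) ?_
    refine integral_mono_ae hint.norm (hHint.div_const _) ?_
    filter_upwards [hH0, hdb] with x h0 hdx
    have habs : ‖(u x : ℂ) - z‖ ^ 2 ≥ d ^ 2 := by
      have h0d := hd.le
      nlinarith
    rw [norm_div, norm_pow]
    have h1 : ‖((H x : ℝ) : ℂ)‖ = H x := by
      simp [Complex.norm_real, abs_of_nonneg h0]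
    rw [h1]
    have hpos : (0:ℝ) < d ^ 2 := by positivity
    have hpos2 : (0:ℝ) < ‖(u x : ℂ) - z‖ ^ 2 := lt_of_lt_of_le hpos (by
      simpa using habs)
    gcongr
  have hId : ∫ x, H x / d^2 ∂μ01 = (∫ x, H x ∂μ01) / d^2 := integral_div _ _
  have h2 : ‖(g:ℂ) * ∫ x, (H x : ℂ) / ((u x : ℂ) - z)^2 ∂μ01‖ < 1 := by
    rw [norm_mul]
    have hgn : ‖(g:ℂ)‖ = g := by simp [Complex.norm_real, abs_of_pos hg]
    rw [hgn]
    calc g * ‖∫ x, (H x : ℂ) / ((u x : ℂ) - z)^2 ∂μ01‖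
        ≤ g * ((∫ x, H x ∂μ01) / d^2) := by
          rw [← hId]; exact mul_le_mul_of_nonneg_left hnorm hg.le
      _ < 1 := by
          rw [mul_div_assoc'] at *
          rw [div_lt_one (by positivity)]
          exact hfar
  rw [heq] at h2
  simp at h2


lemma gtau_ne_one_disk (g : ℝ) (hg : 0 < g) (u H : ℝ → ℝ)
    (hmu : AEStronglyMeasurable u μ01) (hmH : AEStronglyMeasurable H μ01)
    {CH : ℝ} (hCH : ∀ᵐ x ∂μ01, |H x| ≤ CH)
    (hH0 : ∀ᵐ x ∂μ01, 0 ≤ H x)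
    (um up : ℝ) (humle : ∀ᵐ x ∂μ01, um ≤ u x) (huple : ∀ᵐ x ∂μ01, u x ≤ up)
    (z : ℂ) (hy : z.im ≠ 0)
    (hdisk : (z.re - um) * (up - z.re) < z.im ^ 2) :
    (g:ℂ) * (∫ t, (H t : ℂ) / ((u t : ℂ) - z)^2 ∂μ01) ≠ 1 := by
  intro heq
  set x := z.re with hx
  set y := z.im with hyy
  have hy2 : 0 < y ^ 2 := by positivity
  set q : ℝ → ℝ := fun t => (u t - x)^2 + y^2 with hqdef
  have hqpos : ∀ t, 0 < q t := fun t => by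
    have := sq_nonneg (u t - x); simp only [hqdef]; nlinarith
  have hqy : ∀ t, y^2 ≤ q t := fun t => by
    have := sq_nonneg (u t - x); simp only [hqdef]; nlinarith
  have hmq : AEStronglyMeasurable q μ01 := by
    apply AEStronglyMeasurable.add
    · exact (hmu.sub aestronglyMeasurable_const).pow 2
    · exact aestronglyMeasurable_const
  have hnz : ∀ t, ((u t : ℂ) - z) ≠ 0 := by
    intro t h
    apply hy
    have h2 := congrArg Complex.im h
    simpa [neg_eq_zero] using h2
  -- generic integrability
  have key_int : ∀ (v : ℝ → ℝ), AEStronglyMeasurable v μ01 → ∀ c : ℝ,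
      (∀ᵐ t ∂μ01, |v t| ≤ c * q t) →
      Integrable (fun t => H t * v t / (q t)^2) μ01 := by
    intro v hv c hvb
    refine integrable_of_aebdd (C := CH * c / y^2) ?_ ?_
    · exact ((hmH.aemeasurable.mul hv.aemeasurable).div
        (hmq.aemeasurable.pow_const 2)).aestronglyMeasurable
    · filter_upwards [hCH, hvb] with t h1 h2
      have hqt := hqpos t
      have hCH0 : (0:ℝ) ≤ CH := le_trans (abs_nonneg _) h1
      have hc0 : 0 ≤ c * q t := le_trans (abs_nonneg _) h2
      have hc0' : 0 ≤ c := nonneg_of_mul_nonneg_right (by linarith : (0:ℝ) ≤ q t * c) hqt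
      have h3 : |H t| * |v t| ≤ CH * (c * q t) :=
        mul_le_mul h1 h2 (abs_nonneg _) hCH0
      rw [Real.norm_eq_abs, abs_div, abs_of_pos (pow_pos hqt 2), abs_mul]
      calc |H t| * |v t| / q t ^ 2 ≤ CH * (c * q t) / q t ^ 2 :=
            (div_le_div_iff_of_pos_right (pow_pos hqt 2)).mpr h3
        _ = CH * c / q t := by field_simp
        _ ≤ CH * c / y ^ 2 :=
            div_le_div_of_nonneg_left (mul_nonneg hCH0 hc0') hy2 (hqy t)
  -- pointwise decomposition
  have hzsplit : ∀ t : ℝ, (u t : ℂ) - z = ((u t - x : ℝ) : ℂ) - (y : ℂ) * Complex.I := by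
    intro t
    apply Complex.ext <;> simp [hx, hyy]
  have hpt : ∀ t : ℝ, (H t : ℂ) / ((u t : ℂ) - z)^2
      = ((H t * ((u t - x)^2 - y^2) / (q t)^2 : ℝ) : ℂ)
        + ((H t * (2 * (u t - x) * y) / (q t)^2 : ℝ) : ℂ) * Complex.I := by
    intro t
    rw [hzsplit t]
    have := hpt_aux (H t) (u t - x) y hy
    simpa only [hqdef] using this
  -- measurability of pieces
  have hmux : AEMeasurable (fun t => u t - x) μ01 := hmu.aemeasurable.sub aemeasurable_const
  have int_fre : Integrable (fun t => H t * ((u t - x)^2 - y^2) / (q t)^2) μ01 := by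
    refine key_int _ (((hmux.pow_const 2).sub aemeasurable_const).aestronglyMeasurable) 1 ?_
    refine Filter.Eventually.of_forall (fun t => ?_)
    rw [one_mul, abs_le]
    constructor <;> simp only [hqdef] <;> nlinarith [sq_nonneg (u t - x), sq_nonneg y]
  have int_fim : Integrable (fun t => H t * (2 * (u t - x) * y) / (q t)^2) μ01 := by
    refine key_int _ (((aemeasurable_const.mul hmux).mul aemeasurable_const).aestronglyMeasurable) 1 ?_
    refine Filter.Eventually.of_forall (fun t => ?_)
    rw [one_mul, abs_le]
    constructor <;> simp only [hqdef] <;>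
      nlinarith [sq_nonneg (u t - x + y), sq_nonneg (u t - x - y)]
  have int_N : Integrable (fun t => H t * 1 / (q t)^2) μ01 := by
    refine key_int _ aestronglyMeasurable_const (1/y^2) ?_
    refine Filter.Eventually.of_forall (fun t => ?_)
    rw [abs_one, one_div, inv_mul_eq_div, le_div_iff₀ hy2, one_mul]
    exact hqy t
  have int_M : Integrable (fun t => H t * (u t - x) / (q t)^2) μ01 := by
    refine key_int _ hmux.aestronglyMeasurable (1/(2*|y|)) ?_
    refine Filter.Eventually.of_forall (fun t => ?_)
    have hay : 0 < 2*|y| := by positivity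
    rw [div_mul_eq_mul_div, le_div_iff₀ hay]
    have h1 : |u t - x| * (2*|y|) = 2 * |u t - x| * |y| := by ring
    rw [h1]
    have h2 : 2 * |u t - x| * |y| ≤ (u t - x)^2 + y^2 := by
      nlinarith [sq_nonneg (|u t - x| - |y|), sq_abs (u t - x), sq_abs y]
    simpa only [hqdef, one_mul] using h2
  have int_P : Integrable (fun t => H t * (u t - x)^2 / (q t)^2) μ01 := by
    refine key_int _ ((hmux.pow_const 2).aestronglyMeasurable) 1 ?_
    refine Filter.Eventually.of_forall (fun t => ?_)
    rw [one_mul, abs_le]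
    constructor <;> simp only [hqdef] <;> nlinarith [sq_nonneg (u t - x), sq_nonneg y]
  set N := ∫ t, H t * 1 / (q t)^2 ∂μ01 with hN
  set M := ∫ t, H t * (u t - x) / (q t)^2 ∂μ01 with hM
  set P := ∫ t, H t * (u t - x)^2 / (q t)^2 ∂μ01 with hP
  -- decompose the complex integral
  have hdecomp : ∫ t, (H t : ℂ) / ((u t : ℂ) - z)^2 ∂μ01
      = ((∫ t, H t * ((u t - x)^2 - y^2) / (q t)^2 ∂μ01 : ℝ) : ℂ)
        + ((∫ t, H t * (2 * (u t - x) * y) / (q t)^2 ∂μ01 : ℝ) : ℂ) * Complex.I := by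
    have e1 : ((∫ t, H t * ((u t - x)^2 - y^2) / (q t)^2 ∂μ01 : ℝ) : ℂ)
        = ∫ t, ((H t * ((u t - x)^2 - y^2) / (q t)^2 : ℝ) : ℂ) ∂μ01 :=
      (integral_ofReal).symm
    have e2 : ((∫ t, H t * (2 * (u t - x) * y) / (q t)^2 ∂μ01 : ℝ) : ℂ)
        = ∫ t, ((H t * (2 * (u t - x) * y) / (q t)^2 : ℝ) : ℂ) ∂μ01 :=
      (integral_ofReal).symm
    have i1 : Integrable (fun t => ((H t * ((u t - x)^2 - y^2) / (q t)^2 : ℝ) : ℂ)) μ01 :=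
      int_fre.ofReal
    have i2 : Integrable (fun t => ((H t * (2 * (u t - x) * y) / (q t)^2 : ℝ) : ℂ) * Complex.I) μ01 :=
      (int_fim.ofReal).mul_const _
    have e3 : ∫ t, ((H t * (2 * (u t - x) * y) / (q t)^2 : ℝ) : ℂ) * Complex.I ∂μ01
        = (∫ t, ((H t * (2 * (u t - x) * y) / (q t)^2 : ℝ) : ℂ) ∂μ01) * Complex.I :=
      integral_mul_const _ _
    rw [e1, e2, ← e3, ← integral_add i1 i2]
    exact integral_congr_ae (Filter.Eventually.of_forall (fun t => hpt t))
  rw [hdecomp] at heq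
  rw [Complex.ext_iff] at heq
  obtain ⟨hre, him⟩ := heq
  simp [Complex.mul_re, Complex.mul_im] at hre him
  -- him gives M = 0
  have hM0 : M = 0 := by
    have h1 : ∫ t, H t * (2 * (u t - x) * y) / (q t)^2 ∂μ01 = (2*y) * M := by
      rw [hM, ← integral_const_mul]
      exact integral_congr_ae (Filter.Eventually.of_forall (fun t => by ring))
    rw [h1] at him
    rcases him with him | him
    · exact absurd him hg.ne'
    · rcases mul_eq_zero.mp him with h | h
      · exact absurd h (by intro h2; apply hy; linarith)
      · exact h
  -- hre gives P - y^2 * N = 1/g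
  have hPN : P - y^2 * N = 1/g := by
    have h1 : ∫ t, H t * ((u t - x)^2 - y^2) / (q t)^2 ∂μ01
        = P - y^2 * N := by
      rw [hP, hN, ← integral_const_mul, ← integral_sub int_P (int_N.const_mul _)]
      exact integral_congr_ae (Filter.Eventually.of_forall (fun t => by ring))
    rw [h1] at hre
    field_simp
    linarith
  -- nonnegativity facts
  have hN0 : 0 ≤ N := by
    rw [hN]
    refine integral_nonneg_of_ae ?_
    filter_upwards [hH0] with t h1
    exact div_nonneg (by linarith) (pow_nonneg (hqpos t).le 2)
  have hN0' : 0 ≤ ∫ t, H t * 1 / (q t)^2 ∂μ01 := hN0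
  have hA3 : 0 ≤ -P + ((um + up - 2*x) * M + ((x - um)*(up - x)) * N) := by
    have h0 : 0 ≤ ∫ t, H t * ((u t - um)*(up - u t)) / (q t)^2 ∂μ01 := by
      refine integral_nonneg_of_ae ?_
      filter_upwards [hH0, humle, huple] with t h1 h2 h3
      have hqt := (hqpos t)
      have h4 : 0 ≤ (u t - um)*(up - u t) := mul_nonneg (by linarith) (by linarith)
      exact div_nonneg (mul_nonneg h1 h4) (pow_nonneg hqt.le 2)
    have e1 : (fun t => H t * ((u t - um)*(up - u t)) / (q t)^2)
        = fun t => -(H t * (u t - x)^2 / (q t)^2)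
          + ((um + up - 2*x) * (H t * (u t - x) / (q t)^2)
             + ((x - um)*(up - x)) * (H t * 1 / (q t)^2)) := by
      funext t; ring
    have j1 : Integrable (fun t => -(H t * (u t - x)^2 / (q t)^2)) μ01 := int_P.neg
    have j2 : Integrable (fun t => (um + up - 2*x) * (H t * (u t - x) / (q t)^2)) μ01 :=
      int_M.const_mul _
    have j3 : Integrable (fun t => ((x - um)*(up - x)) * (H t * 1 / (q t)^2)) μ01 :=
      int_N.const_mul _
    have j23 : Integrable (fun t => (um + up - 2*x) * (H t * (u t - x) / (q t)^2)
        + ((x - um)*(up - x)) * (H t * 1 / (q t)^2)) μ01 := j2.add j3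
    rw [e1, integral_add j1 j23, integral_add j2 j3,
      integral_neg, integral_const_mul, integral_const_mul] at h0
    rw [hP, hM, hN]
    linarith [h0]
  have hkey2 : (x - um)*(up - x)*N ≤ y^2*N := mul_le_mul_of_nonneg_right hdisk.le hN0
  have hzeroM : (um + up - 2*x) * M = 0 := by rw [hM0]; ring
  have hginv : 0 < 1/g := one_div_pos.mpr hg
  nlinarith [hA3, hPN, hkey2, hzeroM, hginv]


lemma key_unit (g : ℝ) (u H : ℝ → ℝ)
    (hu : MemLp u ⊤ μ01) (hH : MemLp H ⊤ μ01)
    (A : (Lp ℂ 2 μ01 × Lp ℂ 2 μ01) →L[ℂ] (Lp ℂ 2 μ01 × Lp ℂ 2 μ01))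
    (hA : ∀ φ : Lp ℂ 2 μ01 × Lp ℂ 2 μ01,
      ((A φ).1 : ℝ → ℂ) =ᵐ[μ01]
        (fun x => (u x : ℂ) * (φ.1 : ℝ → ℂ) x + (H x : ℂ) * (φ.2 : ℝ → ℂ) x) ∧
      ((A φ).2 : ℝ → ℂ) =ᵐ[μ01]
        (fun x => (g : ℂ) * (∫ y, (φ.1 : ℝ → ℂ) y ∂μ01) + (u x : ℂ) * (φ.2 : ℝ → ℂ) x))
    (z : ℂ) (d : ℝ) (hd : 0 < d)
    (hdb : ∀ᵐ t ∂μ01, d ≤ ‖(u t : ℂ) - z‖)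
    (hτ : (g:ℂ) * (∫ t, (H t : ℂ) / ((u t : ℂ) - z)^2 ∂μ01) ≠ 1) :
    z ∉ spectrum ℂ A := by
  classical
  obtain ⟨CH, hCH0, hCHb⟩ := ae_abs_le_of_memtop hH
  set τ : ℂ := ∫ t, (H t : ℂ) / ((u t : ℂ) - z)^2 ∂μ01 with hτdef
  have hden : (1 : ℂ) - (g:ℂ) * τ ≠ 0 := by
    intro h
    apply hτ
    have : (g:ℂ) * τ = 1 := by linear_combination -h
    exact this
  -- measurability facts
  have hmuc : AEMeasurable (fun t => ((u t : ℝ) : ℂ)) μ01 :=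
    Complex.measurable_ofReal.comp_aemeasurable hu.aestronglyMeasurable.aemeasurable
  have hmHc : AEMeasurable (fun t => ((H t : ℝ) : ℂ)) μ01 :=
    Complex.measurable_ofReal.comp_aemeasurable hH.aestronglyMeasurable.aemeasurable
  have hmw : AEMeasurable (fun t => z - (u t : ℂ)) μ01 :=
    aemeasurable_const.sub hmuc
  have hmwinv : AEMeasurable (fun t => (z - (u t : ℂ))⁻¹) μ01 := hmw.inv
  have hmw2inv : AEMeasurable (fun t => ((z - (u t : ℂ))^2)⁻¹) μ01 :=
    (hmw.pow_const 2).inv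
  -- a.e. bounds
  have hdb' : ∀ᵐ t ∂μ01, d ≤ ‖z - (u t : ℂ)‖ := by
    filter_upwards [hdb] with t ht
    rwa [show z - (u t : ℂ) = -((u t : ℂ) - z) by ring, norm_neg]
  have hw0 : ∀ᵐ t ∂μ01, z - (u t : ℂ) ≠ 0 := by
    filter_upwards [hdb'] with t ht
    intro h
    rw [h, norm_zero] at ht
    linarith
  have hbinv : ∀ᵐ t ∂μ01, ‖(z - (u t : ℂ))⁻¹‖ ≤ 1/d := by
    filter_upwards [hdb'] with t ht
    rw [norm_inv]
    exact inv_anti₀ hd ht |>.trans (le_of_eq (one_div d).symm)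
  have hbinv2 : ∀ᵐ t ∂μ01, ‖((z - (u t : ℂ))^2)⁻¹‖ ≤ 1/d^2 := by
    filter_upwards [hdb'] with t ht
    rw [norm_inv, norm_pow]
    have h1 : d^2 ≤ ‖z - (u t : ℂ)‖^2 := by nlinarith [hd.le, norm_nonneg (z - (u t : ℂ))]
    have h2 : (0:ℝ) < d^2 := by positivity
    rw [one_div]
    exact inv_anti₀ h2 h1
  have hbH : ∀ᵐ t ∂μ01, ‖((H t : ℝ) : ℂ)‖ ≤ CH := by
    filter_upwards [hCHb] with t ht
    simpa [Complex.norm_real] using ht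
  -- integrability of the resolvent kernel H/(u-z)^2
  have int_c : Integrable (fun t => (H t : ℂ) / ((u t : ℂ) - z)^2) μ01 := by
    refine integrable_of_aebdd (C := CH / d^2) ?_ ?_
    · exact (hmHc.div ((hmuc.sub aemeasurable_const).pow_const 2)).aestronglyMeasurable
    · filter_upwards [hCHb, hdb] with t h1 h2
      rw [norm_div, norm_pow]
      have e1 : ‖((H t : ℝ):ℂ)‖ = |H t| := by simp [Complex.norm_real]
      rw [e1]
      have h3 : d^2 ≤ ‖(u t : ℂ) - z‖^2 := by
        have : d ≤ ‖(u t : ℂ) - z‖ := by assumption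
        nlinarith [hd.le, norm_nonneg ((u t : ℂ) - z)]
      exact div_le_div₀ hCH0 h1 (by positivity) h3
  -- the operator z - A
  set T : (Lp ℂ 2 μ01 × Lp ℂ 2 μ01) →L[ℂ] (Lp ℂ 2 μ01 × Lp ℂ 2 μ01) :=
    algebraMap ℂ _ z - A with hT
  have hTapp : ∀ φ, T φ = z • φ - A φ := by
    intro φ
    rw [hT, ContinuousLinearMap.sub_apply, Algebra.algebraMap_eq_smul_one,
      ContinuousLinearMap.smul_apply, ContinuousLinearMap.one_apply]
  rw [spectrum.notMem_iff, ContinuousLinearMap.isUnit_iff_bijective]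
  constructor
  · -- injective
    intro a b hab
    have hker : ∀ φ, T φ = 0 → φ = 0 := by
      intro φ hφ0
      obtain ⟨hA1, hA2⟩ := hA φ
      have h0 : z • φ - A φ = 0 := by rw [← hTapp φ]; exact hφ0
      have hT1 : z • φ.1 - (A φ).1 = 0 := by
        have h := congrArg Prod.fst h0
        simpa using h
      have hT2 : z • φ.2 - (A φ).2 = 0 := by
        have h := congrArg Prod.snd h0
        simpa using h
      have e1 : (⇑(z • φ.1 - (A φ).1) : ℝ → ℂ) =ᵐ[μ01] 0 := by
        rw [hT1]; exact Lp.coeFn_zero ℂ 2 μ01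
      have e2 : (⇑(z • φ.2 - (A φ).2) : ℝ → ℂ) =ᵐ[μ01] 0 := by
        rw [hT2]; exact Lp.coeFn_zero ℂ 2 μ01
      set s : ℂ := ∫ t, (φ.1 : ℝ → ℂ) t ∂μ01 with hs
      have hae1 : ∀ᵐ t ∂μ01,
          (z - (u t : ℂ)) * (φ.1 : ℝ → ℂ) t = (H t : ℂ) * (φ.2 : ℝ → ℂ) t := by
        filter_upwards [e1, Lp.coeFn_sub (z • φ.1) ((A φ).1), Lp.coeFn_smul z φ.1, hA1]
          with t h1 h2 h3 h4
        rw [h2] at h1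
        simp only [Pi.sub_apply, Pi.zero_apply] at h1
        rw [h3, h4, Pi.smul_apply, smul_eq_mul] at h1
        linear_combination h1
      have hae2 : ∀ᵐ t ∂μ01,
          (z - (u t : ℂ)) * (φ.2 : ℝ → ℂ) t = (g : ℂ) * s := by
        filter_upwards [e2, Lp.coeFn_sub (z • φ.2) ((A φ).2), Lp.coeFn_smul z φ.2, hA2]
          with t h1 h2 h3 h4
        rw [h2] at h1
        simp only [Pi.sub_apply, Pi.zero_apply] at h1
        rw [h3, h4, Pi.smul_apply, smul_eq_mul] at h1
        rw [hs]
        linear_combination h1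
      have hφ2ae : ∀ᵐ t ∂μ01, (φ.2 : ℝ → ℂ) t = (g : ℂ) * s * (z - (u t : ℂ))⁻¹ := by
        filter_upwards [hae2, hw0] with t h1 h2
        field_simp
        linear_combination h1
      have hφ1ae : ∀ᵐ t ∂μ01,
          (φ.1 : ℝ → ℂ) t = (g : ℂ) * s * ((H t : ℂ) / ((u t : ℂ) - z)^2) := by
        filter_upwards [hae1, hφ2ae, hw0] with t h1 h2 h3
        have e : ((u t : ℂ) - z)^2 = (z - (u t : ℂ))^2 := by ring
        rw [e]
        field_simp at h2 ⊢
        linear_combination (z - (u t : ℂ)) * h1 + (H t : ℂ) * h2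
      have hseq : s = (g : ℂ) * s * τ := by
        calc s = ∫ t, (g:ℂ) * s * ((H t : ℂ) / ((u t : ℂ) - z)^2) ∂μ01 :=
              integral_congr_ae hφ1ae
          _ = (g:ℂ) * s * τ := by rw [hτdef]; exact integral_const_mul _ _
      have hmul : s * ((1:ℂ) - (g:ℂ) * τ) = 0 := by linear_combination hseq
      have hs0 : s = 0 := by
        rcases mul_eq_zero.mp hmul with h | h
        · exact h
        · exact absurd h hden
      have hφ10 : φ.1 = 0 := by
        refine Lp.ext ?_
        filter_upwards [hφ1ae, Lp.coeFn_zero ℂ 2 μ01] with t h1 h2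
        rw [h1, hs0, h2]
        simp
      have hφ20 : φ.2 = 0 := by
        refine Lp.ext ?_
        filter_upwards [hφ2ae, Lp.coeFn_zero ℂ 2 μ01] with t h1 h2
        rw [h1, hs0, h2]
        simp
      have : φ = (φ.1, φ.2) := rfl
      rw [this, hφ10, hφ20]
      rfl
    have h1 : T (a - b) = 0 := by rw [map_sub, hab, sub_self]
    have := hker _ h1
    exact sub_eq_zero.mp this
  · -- surjective
    intro ψ
    set p1 : ℝ → ℂ := (ψ.1 : ℝ → ℂ) with hp1
    set p2 : ℝ → ℂ := (ψ.2 : ℝ → ℂ) with hp2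
    set K : ℂ := ∫ t, ((z - (u t:ℂ))⁻¹ * p1 t
      + ((z - (u t:ℂ))^2)⁻¹ * ((H t:ℂ) * p2 t)) ∂μ01 with hK
    set s : ℂ := K * ((1:ℂ) - (g:ℂ)*τ)⁻¹ with hsdef
    have hp2s : MemLp (fun t => p2 t + (g:ℂ)*s) 2 μ01 :=
      (Lp.memLp ψ.2).add (memLp_const _)
    have m1 : MemLp (fun t => (z - (u t:ℂ))⁻¹ * p1 t) 2 μ01 :=
      memℒp2_of_bdd_mul (Lp.memLp ψ.1) hmwinv.aestronglyMeasurable hbinv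
    have mH2 : MemLp (fun t => (H t:ℂ) * (p2 t + (g:ℂ)*s)) 2 μ01 :=
      memℒp2_of_bdd_mul hp2s hmHc.aestronglyMeasurable hbH
    have m2 : MemLp (fun t => ((z - (u t:ℂ))^2)⁻¹ * ((H t:ℂ) * (p2 t + (g:ℂ)*s))) 2 μ01 :=
      memℒp2_of_bdd_mul mH2 hmw2inv.aestronglyMeasurable hbinv2
    have hf1mem : MemLp (fun t => (z - (u t:ℂ))⁻¹ * p1 t
        + ((z - (u t:ℂ))^2)⁻¹ * ((H t:ℂ) * (p2 t + (g:ℂ)*s))) 2 μ01 := m1.add m2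
    have hf2mem : MemLp (fun t => (z - (u t:ℂ))⁻¹ * (p2 t + (g:ℂ)*s)) 2 μ01 :=
      memℒp2_of_bdd_mul hp2s hmwinv.aestronglyMeasurable hbinv
    set Φ : Lp ℂ 2 μ01 × Lp ℂ 2 μ01 := (hf1mem.toLp _, hf2mem.toLp _) with hΦ
    refine ⟨Φ, ?_⟩
    have int_m1 : Integrable (fun t => (z - (u t:ℂ))⁻¹ * p1 t) μ01 :=
      m1.integrable one_le_two
    have int_mHp2 : Integrable (fun t => ((z - (u t:ℂ))^2)⁻¹ * ((H t:ℂ) * p2 t)) μ01 :=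
      (memℒp2_of_bdd_mul (memℒp2_of_bdd_mul (Lp.memLp ψ.2) hmHc.aestronglyMeasurable hbH)
        hmw2inv.aestronglyMeasurable hbinv2).integrable one_le_two
    have int_K : Integrable (fun t => (z - (u t:ℂ))⁻¹ * p1 t
        + ((z - (u t:ℂ))^2)⁻¹ * ((H t:ℂ) * p2 t)) μ01 := int_m1.add int_mHp2
    have int_tau : Integrable (fun t => ((g:ℂ)*s) * ((H t:ℂ) / ((u t:ℂ) - z)^2)) μ01 :=
      int_c.const_mul _
    have htauint : ∫ t, ((g:ℂ)*s) * ((H t:ℂ) / ((u t:ℂ) - z)^2) ∂μ01 = ((g:ℂ)*s) * τ := by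
      rw [hτdef]; exact integral_const_mul _ _
    have hf1_int_eq : ∫ t, ((z - (u t:ℂ))⁻¹ * p1 t
        + ((z - (u t:ℂ))^2)⁻¹ * ((H t:ℂ) * (p2 t + (g:ℂ)*s))) ∂μ01 = s := by
      have hsplit : (fun t => (z - (u t:ℂ))⁻¹ * p1 t
          + ((z - (u t:ℂ))^2)⁻¹ * ((H t:ℂ) * (p2 t + (g:ℂ)*s)))
          =ᵐ[μ01] (fun t => ((z - (u t:ℂ))⁻¹ * p1 t
            + ((z - (u t:ℂ))^2)⁻¹ * ((H t:ℂ) * p2 t))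
            + ((g:ℂ)*s) * ((H t:ℂ) / ((u t:ℂ) - z)^2)) := by
        filter_upwards [hw0] with t h3
        have e : ((u t:ℂ) - z)^2 = (z - (u t:ℂ))^2 := by ring
        rw [e, div_eq_mul_inv]
        ring
      rw [integral_congr_ae hsplit, integral_add int_K int_tau, htauint, ← hK, hsdef]
      field_simp
      ring
    have hsint : ∫ t, (Φ.1 : ℝ → ℂ) t ∂μ01 = s := by
      rw [integral_congr_ae (MemLp.coeFn_toLp hf1mem)]
      exact hf1_int_eq
    obtain ⟨hA1, hA2⟩ := hA Φ
    rw [hTapp Φ, Prod.ext_iff]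
    constructor
    · -- first component
      have e0 : (z • Φ - A Φ).1 = z • Φ.1 - (A Φ).1 := rfl
      rw [e0]
      refine Lp.ext ?_
      filter_upwards [Lp.coeFn_sub (z • Φ.1) ((A Φ).1), Lp.coeFn_smul z Φ.1, hA1,
        MemLp.coeFn_toLp hf1mem, MemLp.coeFn_toLp hf2mem, hw0] with t h2 h3 h4 h5 h6 h7
      rw [h2]
      simp only [Pi.sub_apply]
      rw [h3, Pi.smul_apply, smul_eq_mul, h4]
      have h5' : (Φ.1 : ℝ → ℂ) t = (z - (u t:ℂ))⁻¹ * p1 t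
          + ((z - (u t:ℂ))^2)⁻¹ * ((H t:ℂ) * (p2 t + (g:ℂ)*s)) := h5
      have h6' : (Φ.2 : ℝ → ℂ) t = (z - (u t:ℂ))⁻¹ * (p2 t + (g:ℂ)*s) := h6
      rw [h5', h6']
      have hw1 : (z - (u t:ℂ)) * (z - (u t:ℂ))⁻¹ = 1 := mul_inv_cancel₀ h7
      have e2 : ((z - (u t:ℂ))^2)⁻¹ = (z - (u t:ℂ))⁻¹ * (z - (u t:ℂ))⁻¹ := by
        rw [sq, mul_inv]
      rw [e2]
      linear_combination (p1 t + (z - (u t:ℂ))⁻¹ * ((H t:ℂ) * (p2 t + (g:ℂ)*s))) * hw1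
    · -- second component
      have e0 : (z • Φ - A Φ).2 = z • Φ.2 - (A Φ).2 := rfl
      rw [e0]
      refine Lp.ext ?_
      have hA2' : ((A Φ).2 : ℝ → ℂ) =ᵐ[μ01]
          (fun x => (g : ℂ) * s + (u x : ℂ) * (Φ.2 : ℝ → ℂ) x) := by
        rw [← hsint]
        exact hA2
      filter_upwards [Lp.coeFn_sub (z • Φ.2) ((A Φ).2), Lp.coeFn_smul z Φ.2, hA2',
        MemLp.coeFn_toLp hf2mem, hw0] with t h2 h3 h4 h6 h7
      rw [h2]
      simp only [Pi.sub_apply]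
      rw [h3, Pi.smul_apply, smul_eq_mul, h4]
      have h6' : (Φ.2 : ℝ → ℂ) t = (z - (u t:ℂ))⁻¹ * (p2 t + (g:ℂ)*s) := h6
      rw [h6']
      have hw1 : (z - (u t:ℂ)) * (z - (u t:ℂ))⁻¹ = 1 := mul_inv_cancel₀ h7
      linear_combination (p2 t + (g:ℂ)*s) * hw1

/-- Localization of the spectrum of `A₀`: with `ũ₋ = essinf ũ`,
`ũ₊ = esssup ũ` and `h = ∫₀¹ H dλ`, one has
`σ(A₀) ⊆ J₋ ∪ J₊ ∪ R` where `J₋ = [ũ₋ - √(gh), ũ₋)`, `J₊ = (ũ₊, ũ₊ + √(gh)]` and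
`R = {z : ũ₋ ≤ Re z ≤ ũ₊, |Im z| ≤ √(gh), |z - (ũ₋+ũ₊)/2| ≤ (ũ₊-ũ₋)/2}`. -/
theorem stmt8 (g : ℝ) (hg : 0 < g) (u H : ℝ → ℝ)
    (hu : MemLp u ⊤ μ01) (hH : MemLp H ⊤ μ01)
    (hHpos : 0 < essInf H μ01)
    (A : (Lp ℂ 2 μ01 × Lp ℂ 2 μ01) →L[ℂ] (Lp ℂ 2 μ01 × Lp ℂ 2 μ01))
    (hA : ∀ φ : Lp ℂ 2 μ01 × Lp ℂ 2 μ01,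
      ((A φ).1 : ℝ → ℂ) =ᵐ[μ01]
        (fun x => (u x : ℂ) * (φ.1 : ℝ → ℂ) x + (H x : ℂ) * (φ.2 : ℝ → ℂ) x) ∧
      ((A φ).2 : ℝ → ℂ) =ᵐ[μ01]
        (fun x => (g : ℂ) * (∫ y, (φ.1 : ℝ → ℂ) y ∂μ01) + (u x : ℂ) * (φ.2 : ℝ → ℂ) x))
    (um up h : ℝ)
    (hum : um = essInf u μ01) (hup : up = essSup u μ01) (hh : h = ∫ x, H x ∂μ01) :
    spectrum ℂ A ⊆
      ((fun r : ℝ => (r : ℂ)) '' Set.Ico (um - Real.sqrt (g * h)) um) ∪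
      ((fun r : ℝ => (r : ℂ)) '' Set.Ioc up (up + Real.sqrt (g * h))) ∪
      {z : ℂ | um ≤ z.re ∧ z.re ≤ up ∧ |z.im| ≤ Real.sqrt (g * h) ∧
        ‖z - (((um + up) / 2 : ℝ) : ℂ)‖ ≤ (up - um) / 2} := by
  intro z hz
  by_contra hnot
  simp only [Set.mem_union, not_or] at hnot
  obtain ⟨⟨n1, n2⟩, n3⟩ := hnot
  -- preliminary bounds
  obtain ⟨Cu, hCu0, hCub⟩ := ae_abs_le_of_memtop hu
  obtain ⟨CH, hCH0, hCHb⟩ := ae_abs_le_of_memtop hH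
  have hmu := hu.aestronglyMeasurable
  have hmH := hH.aestronglyMeasurable
  have hHint : Integrable H μ01 := hH.integrable le_top
  have hbddH : Filter.IsBoundedUnder (· ≥ ·) (ae μ01) H := by
    refine ⟨-CH, ?_⟩
    rw [Filter.eventually_map]
    filter_upwards [hCHb] with x hx
    have := abs_le.mp hx
    linarith [this.1]
  have hbddu_lower : Filter.IsBoundedUnder (· ≥ ·) (ae μ01) u := by
    refine ⟨-Cu, ?_⟩
    rw [Filter.eventually_map]
    filter_upwards [hCub] with x hx
    have := abs_le.mp hx
    linarith [this.1]
  have hbddu_upper : Filter.IsBoundedUnder (· ≤ ·) (ae μ01) u := by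
    refine ⟨Cu, ?_⟩
    rw [Filter.eventually_map]
    filter_upwards [hCub] with x hx
    exact (abs_le.mp hx).2
  have hum_ae : ∀ᵐ x ∂μ01, um ≤ u x := by
    rw [hum]; exact ae_essInf_le hbddu_lower
  have hup_ae : ∀ᵐ x ∂μ01, u x ≤ up := by
    rw [hup]; exact ae_le_essSup hbddu_upper
  have hH0ae : ∀ᵐ x ∂μ01, 0 ≤ H x := by
    have := ae_lt_of_lt_essInf hHpos hbddH
    filter_upwards [this] with x hx
    exact hx.le
  have hh0 : 0 < h := by
    have h1 : ∫ x, (fun _ : ℝ => essInf H μ01) x ∂μ01 ≤ ∫ x, H x ∂μ01 := by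
      refine integral_mono_ae (integrable_const _) hHint ?_
      exact ae_essInf_le hbddH
    rw [integral_const] at h1
    simp only [probReal_univ, measure_univ, ENNReal.toReal_one, smul_eq_mul, one_mul] at h1
    rw [hh]
    linarith
  have hum_up : um ≤ up := by
    have hne : (ae μ01).NeBot := ae_neBot.mpr (IsProbabilityMeasure.ne_zero μ01)
    obtain ⟨t0, h1, h2⟩ := (hum_ae.and hup_ae).exists
    linarith
  set r0 := Real.sqrt (g * h) with hr0def
  have hgh : 0 < g * h := by positivity
  have hr0 : 0 < r0 := Real.sqrt_pos.mpr hgh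
  have hr0sq : r0^2 = g * h := Real.sq_sqrt hgh.le
  -- key step: show z ∉ spectrum
  suffices hns : z ∉ spectrum ℂ A by exact hns hz
  by_cases him : z.im = 0
  · -- z is real
    have hzx : z = ((z.re : ℝ) : ℂ) := by
      apply Complex.ext <;> simp [him]
    set x := z.re with hxdef
    have hx : x < um - r0 ∨ up + r0 < x := by
      by_contra hcon
      push_neg at hcon
      obtain ⟨hc1, hc2⟩ := hcon
      rcases lt_or_ge x um with hlt | hge
      · exact n1 ⟨x, ⟨hc1, hlt⟩, hzx.symm⟩
      · rcases lt_or_ge up x with hgt | hle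
        · exact n2 ⟨x, ⟨hgt, hc2⟩, hzx.symm⟩
        · refine n3 ⟨hge, hle, ?_, ?_⟩
          · rw [him]; simpa using hr0.le
          · have e1 : z - (((um + up) / 2 : ℝ) : ℂ) = ((x - (um + up)/2 : ℝ) : ℂ) := by
              rw [hzx]; push_cast; ring
            rw [e1, Complex.norm_real, Real.norm_eq_abs]
            rw [abs_le]
            constructor <;> [linarith; linarith]
    rcases hx with hx | hx
    · -- far left
      refine key_unit g u H hu hH A hA z (um - x) (by linarith) ?_ ?_
      · filter_upwards [hum_ae] with t ht
        have e1 : (u t : ℂ) - z = ((u t - x : ℝ) : ℂ) := by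
          rw [hzx]; push_cast; ring
        rw [e1, Complex.norm_real, Real.norm_eq_abs]
        calc um - x ≤ u t - x := by linarith
          _ ≤ |u t - x| := le_abs_self _
      · refine gtau_ne_one_far g hg u H hmu hmH hHint hH0ae hCH0 hCHb z (um - x)
          (by linarith) ?_ ?_
        · filter_upwards [hum_ae] with t ht
          have e1 : (u t : ℂ) - z = ((u t - x : ℝ) : ℂ) := by
            rw [hzx]; push_cast; ring
          rw [e1, Complex.norm_real, Real.norm_eq_abs]
          calc um - x ≤ u t - x := by linarith
            _ ≤ |u t - x| := le_abs_self _
        · rw [← hh]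
          nlinarith
    · -- far right
      refine key_unit g u H hu hH A hA z (x - up) (by linarith) ?_ ?_
      · filter_upwards [hup_ae] with t ht
        have e1 : (u t : ℂ) - z = ((u t - x : ℝ) : ℂ) := by
          rw [hzx]; push_cast; ring
        rw [e1, Complex.norm_real, Real.norm_eq_abs]
        calc x - up ≤ x - u t := by linarith
          _ ≤ |u t - x| := by rw [abs_sub_comm]; exact le_abs_self _
      · refine gtau_ne_one_far g hg u H hmu hmH hHint hH0ae hCH0 hCHb z (x - up)
          (by linarith) ?_ ?_
        · filter_upwards [hup_ae] with t ht
          have e1 : (u t : ℂ) - z = ((u t - x : ℝ) : ℂ) := by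
            rw [hzx]; push_cast; ring
          rw [e1, Complex.norm_real, Real.norm_eq_abs]
          calc x - up ≤ x - u t := by linarith
            _ ≤ |u t - x| := by rw [abs_sub_comm]; exact le_abs_self _
        · rw [← hh]
          nlinarith
  · -- z not real
    have habsim : ∀ t : ℝ, |z.im| ≤ ‖(u t : ℂ) - z‖ := by
      intro t
      have h1 := Complex.abs_im_le_norm ((u t : ℂ) - z)
      have e1 : ((u t : ℂ) - z).im = -z.im := by simp
      rw [e1, abs_neg] at h1
      exact h1
    have hdim : 0 < |z.im| := abs_pos.mpr him
    rcases lt_or_ge r0 |z.im| with hbig | hsmall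
    · -- large imaginary part
      refine key_unit g u H hu hH A hA z |z.im| hdim
        (Filter.Eventually.of_forall habsim) ?_
      refine gtau_ne_one_far g hg u H hmu hmH hHint hH0ae hCH0 hCHb z |z.im| hdim
        (Filter.Eventually.of_forall habsim) ?_
      rw [← hh]
      nlinarith
    · -- disk case
      have hdisk : (z.re - um) * (up - z.re) < z.im^2 := by
        have habs : (up - um)/2 < ‖z - (((um + up) / 2 : ℝ) : ℂ)‖ := by
          by_contra hcc
          push_neg at hcc
          have hre : |z.re - (um + up)/2| ≤ (up - um)/2 := by
            have h1 := Complex.abs_re_le_norm (z - (((um + up) / 2 : ℝ) : ℂ))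
            have e1 : (z - (((um + up) / 2 : ℝ) : ℂ)).re = z.re - (um + up)/2 := by simp
            rw [e1] at h1
            exact h1.trans hcc
          have h2 := abs_le.mp hre
          exact n3 ⟨by linarith [h2.1], by linarith [h2.2], hsmall, hcc⟩
        have hsq : ((up - um)/2)^2 < (z.re - (um + up)/2)^2 + z.im^2 := by
          have h1 : (‖z - (((um + up) / 2 : ℝ) : ℂ)‖)^2
              = (z.re - (um + up)/2)^2 + z.im^2 := by
            rw [Complex.sq_norm, Complex.normSq_apply]
            simp
            ring
          nlinarith [norm_nonneg (z - (((um + up) / 2 : ℝ) : ℂ)), hum_up]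
        nlinarith
      refine key_unit g u H hu hH A hA z |z.im| hdim
        (Filter.Eventually.of_forall habsim) ?_
      exact gtau_ne_one_disk g hg u H hmu hmH hCHb hH0ae um up hum_ae hup_ae z him hdisk
end
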